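/- arXiv:2410.00177 — 14 statements merged into one kernel-verified Lean document; each statement's English description precedes it below -/
import Mathlib

section
/- Let f(x,y) = Ax² + Bxy + Cy² be an integral binary quadratic form with discriminant Δ = B² − 4AC ≠ 0, and let m > 1 be an integer with gcd(m, 2Δ) = 1. Suppose Δ is a square modulo m, i.e. there is an integer v with v² ≡ Δ (mod m). Then for every integer ℓ there exist coprime integers x, y (gcd(x,y) = 1) with f(x,y) ≡ ℓ (mod m). -/
/-- Splitting a natural number into a part coprime to `g` and a part all of whose
prime factors divide `g`, the two parts being coprime to each other. -/
lemma nat_coprime_split (g : ℕ) : ∀ n : ℕ, n ≠ 0 →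
    ∃ d : ℕ, d ∣ n ∧ Nat.Coprime (n / d) g ∧ Nat.Coprime (n / d) d ∧
      ∀ p : ℕ, p.Prime → p ∣ d → p ∣ g := by
  intro n
  induction n using Nat.strong_induction_on with
  | _ n IH =>
    intro hn
    by_cases hc : Nat.Coprime n g
    · refine ⟨1, one_dvd _, by simpa using hc, by simp, ?_⟩
      intro p hp h1
      exact absurd (Nat.eq_one_of_dvd_one h1) hp.ne_one
    · set c := Nat.gcd n g with hcdef
      have hcn : c ∣ n := Nat.gcd_dvd_left n g
      have hc0 : c ≠ 0 := fun h => hn (by simpa [h] using Nat.eq_zero_of_gcd_eq_zero_left h)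
      have hcne1 : c ≠ 1 := hc
      have hc1 : 1 < c := by omega
      have hlt : n / c < n := Nat.div_lt_self (Nat.pos_of_ne_zero hn) hc1
      have hn' : n / c ≠ 0 := by
        have := Nat.le_of_dvd (Nat.pos_of_ne_zero hn) hcn
        have := Nat.div_pos this (Nat.pos_of_ne_zero hc0)
        omega
      obtain ⟨d', hd'n, hcg, hcd, hpr⟩ := IH (n / c) hlt hn'
      have hmul : c * (n / c) = n := Nat.mul_div_cancel' hcn
      refine ⟨c * d', ?_, ?_, ?_, ?_⟩
      · calc c * d' ∣ c * (n / c) := mul_dvd_mul_left c hd'n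
          _ = n := hmul
      · rwa [Nat.div_div_eq_div_mul] at hcg
      · have h1 : Nat.Coprime (n / c / d') d' := hcd
        have h2 : Nat.Coprime (n / c / d') c :=
          Nat.Coprime.coprime_dvd_right (Nat.gcd_dvd_right n g) hcg
        have := Nat.Coprime.mul_right h2 h1
        rwa [Nat.div_div_eq_div_mul] at this
      · intro p hp hpd
        rcases (Nat.Prime.dvd_mul hp).mp hpd with h | h
        · exact h.trans (Nat.gcd_dvd_right n g)
        · exact hpr p hp h

/-- If the discriminant of an integral binary quadratic form is a nonzero
square modulo `m`, with `gcd(m, 2Δ) = 1`, then every residue class mod `m` is attained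
primitively by the form. -/
theorem stmt_0 (A B C : ℤ) (hΔ : B ^ 2 - 4 * A * C ≠ 0)
    (m : ℤ) (hm : 1 < m) (hcop : Int.gcd m (2 * (B ^ 2 - 4 * A * C)) = 1)
    (hsq : ∃ v : ℤ, v ^ 2 ≡ B ^ 2 - 4 * A * C [ZMOD m]) :
    ∀ ℓ : ℤ, ∃ x y : ℤ, Int.gcd x y = 1 ∧
      A * x ^ 2 + B * x * y + C * y ^ 2 ≡ ℓ [ZMOD m] := by
  intro ℓ
  obtain ⟨v, hv⟩ := hsq
  have hm0 : 0 < m := lt_trans one_pos hm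
  -- basic coprimality facts
  have hMD : m ∣ (B ^ 2 - 4 * A * C) - v ^ 2 := hv.dvd
  have hcop' : IsCoprime m (2 * (B ^ 2 - 4 * A * C)) :=
    Int.isCoprime_iff_gcd_eq_one.mpr hcop
  have hcopD : IsCoprime m (B ^ 2 - 4 * A * C) := hcop'.of_mul_right_right
  -- the splitting of m
  set M : ℕ := m.natAbs with hMdef
  have hMm : (M : ℤ) = m := Int.natAbs_of_nonneg hm0.le
  have hM0 : M ≠ 0 := by
    intro h
    rw [h] at hMm
    omega
  set g : ℕ := Int.gcd (B - v) (2 * A) with hgdef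
  obtain ⟨d, hdM, hco_g, hco_d, hpr⟩ := nat_coprime_split g M hM0
  set m1 : ℤ := ((M / d : ℕ) : ℤ) with hm1def
  set m2 : ℤ := (d : ℤ) with hm2def
  have hsplit : m1 * m2 = m := by
    rw [hm1def, hm2def, ← Nat.cast_mul, Nat.div_mul_cancel hdM, hMm]
  have hgcd12 : IsCoprime m1 m2 := by
    rw [Int.isCoprime_iff_gcd_eq_one, hm1def, hm2def, Int.gcd_natCast_natCast]
    exact hco_d
  obtain ⟨u, w, huw⟩ := hgcd12
  -- the vector (α, γ) : an (almost-)primitive zero of f mod m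
  set α : ℤ := (B + v) * (u * m1) + (B - v) * (w * m2) with hαdef
  set γ : ℤ := -(2 * A) with hγdef
  have hα1 : m1 ∣ α - (B - v) := ⟨2 * v * u, by linear_combination (B - v) * huw⟩
  have hα2 : m2 ∣ α - (B + v) := ⟨-(2 * v) * w, by linear_combination (B + v) * huw⟩
  have hF0 : m ∣ A * α ^ 2 + B * α * γ + C * γ ^ 2 := by
    obtain ⟨k1, hk1⟩ := hα1
    obtain ⟨k2, hk2⟩ := hα2
    obtain ⟨k0, hk0⟩ := hMD
    refine ⟨A * k2 * k1 - A * k0, ?_⟩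
    have hγ : γ = -(2 * A) := hγdef
    calc A * α ^ 2 + B * α * γ + C * γ ^ 2
        = A * (α - (B + v)) * (α - (B - v)) + A * ((v ^ 2) - (B ^ 2 - 4 * A * C)) := by
          rw [hγ]; ring
      _ = A * (m2 * k2) * (m1 * k1) - A * (m * k0) := by rw [← hk1, ← hk2, ← hk0]; ring
      _ = (m1 * m2) * (A * k2 * k1) - A * (m * k0) := by ring
      _ = m * (A * k2 * k1 - A * k0) := by rw [hsplit]; ring
  -- the gcd of α and γ is coprime to m
  set H : ℕ := Int.gcd α γ with hHdef
  have hMH : Nat.Coprime M H := by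
    by_contra hne
    set q : ℕ := Nat.gcd M H with hq
    set p : ℕ := q.minFac with hpdef
    have hp : p.Prime := Nat.minFac_prime hne
    have hpq : p ∣ q := Nat.minFac_dvd q
    have hpM : p ∣ M := hpq.trans (Nat.gcd_dvd_left M H)
    have hpH : p ∣ H := hpq.trans (Nat.gcd_dvd_right M H)
    have hpα : (p : ℤ) ∣ α := by
      have := hpH.trans (Nat.gcd_dvd_left α.natAbs γ.natAbs)
      exact (Int.dvd_natAbs).mp (Int.natCast_dvd_natCast.mpr this)
    have hpγ : (p : ℤ) ∣ γ := by
      have := hpH.trans (Nat.gcd_dvd_right α.natAbs γ.natAbs)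
      exact (Int.dvd_natAbs).mp (Int.natCast_dvd_natCast.mpr this)
    have hp2A : (p : ℤ) ∣ 2 * A := by
      have : (p : ℤ) ∣ -γ := hpγ.neg_right
      simpa [hγdef] using this
    have hpm : (p : ℤ) ∣ m := by
      rw [← hMm]; exact_mod_cast Int.natCast_dvd_natCast.mpr hpM
    have hpMsplit : p ∣ (M / d) * d := by rwa [Nat.div_mul_cancel hdM]
    have hcontra : (p : ℤ) ∣ 2 * (B ^ 2 - 4 * A * C) → False := by
      intro h2D
      have : (p : ℤ) ∣ (Int.gcd m (2 * (B ^ 2 - 4 * A * C)) : ℤ) := Int.dvd_coe_gcd hpm h2D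
      rw [hcop] at this
      have := Int.le_of_dvd one_pos this
      have := hp.two_le
      omega
    rcases (hp.dvd_mul).mp hpMsplit with hcase | hcase
    · -- p divides m1-part : p ∣ B - v and p ∣ 2A, contradicting coprimality with g
      have hpm1 : (p : ℤ) ∣ m1 := by rw [hm1def]; exact_mod_cast hcase
      have hpBv : (p : ℤ) ∣ B - v := by
        have h1 : (p : ℤ) ∣ α - (B - v) := hpm1.trans hα1
        have := dvd_sub hpα h1
        simpa using this
      have hpg : p ∣ g := by
        rw [hgdef]
        exact Nat.dvd_gcd (Int.natAbs_dvd_natAbs.mpr (by simpa using hpBv))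
          (Int.natAbs_dvd_natAbs.mpr (by simpa using hp2A))
      have : p ∣ Nat.gcd (M / d) g := Nat.dvd_gcd hcase hpg
      rw [hco_g] at this
      exact hp.ne_one (Nat.eq_one_of_dvd_one this)
    · -- p divides d : then p ∣ B - v (via g) and p ∣ B + v, so p ∣ 2v, contradiction
      have hpg : p ∣ g := hpr p hp hcase
      have hpBv : (p : ℤ) ∣ B - v := by
        have := hpg.trans (Nat.gcd_dvd_left (B - v).natAbs (2 * A).natAbs)
        exact (Int.dvd_natAbs).mp (Int.natCast_dvd_natCast.mpr this)
      have hpm2 : (p : ℤ) ∣ m2 := by rw [hm2def]; exact_mod_cast hcase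
      have hpBv' : (p : ℤ) ∣ B + v := by
        have h1 : (p : ℤ) ∣ α - (B + v) := hpm2.trans hα2
        have := dvd_sub hpα h1
        simpa using this
      have hp2v : (p : ℤ) ∣ 2 * v := by
        have := dvd_sub hpBv' hpBv
        have h2 : B + v - (B - v) = 2 * v := by ring
        rwa [h2] at this
      have hpint : Prime (p : ℤ) := Nat.prime_iff_prime_int.mp hp
      rcases hpint.dvd_mul.mp hp2v with h2 | hv'
      · exact hcontra (Dvd.dvd.mul_right h2 _)
      · have hvv : (p : ℤ) ∣ v ^ 2 := dvd_pow hv' (by norm_num)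
        have hD : (p : ℤ) ∣ B ^ 2 - 4 * A * C := by
          have h1 : (p : ℤ) ∣ (B ^ 2 - 4 * A * C) - v ^ 2 := hpm.trans hMD
          have := dvd_add h1 hvv
          simpa using this
        exact hcontra (hD.mul_left 2)
  -- primitivize (α, γ)
  have hH0 : H ≠ 0 := by
    intro h
    rw [h, Nat.coprime_zero_right] at hMH
    rw [hMH] at hMm
    omega
  have hHpos : 0 < Int.gcd α γ := Nat.pos_of_ne_zero hH0
  set α' : ℤ := α / (H : ℤ) with hα'def
  set γ' : ℤ := γ / (H : ℤ) with hγ'def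
  have hαeq : α = (H : ℤ) * α' := (Int.mul_ediv_cancel' (Int.gcd_dvd_left α γ)).symm
  have hγeq : γ = (H : ℤ) * γ' := (Int.mul_ediv_cancel' (Int.gcd_dvd_right α γ)).symm
  have hprim : Int.gcd α' γ' = 1 := Int.gcd_div_gcd_div_gcd hHpos
  have hcopH : IsCoprime m ((H : ℤ)) := by
    rw [Int.isCoprime_iff_gcd_eq_one]
    have : Int.gcd m (H : ℤ) = Nat.gcd M H := by
      rw [Int.gcd]
      simp [hMdef]
    rw [this]
    exact hMH
  have hF0' : m ∣ A * α' ^ 2 + B * α' * γ' + C * γ' ^ 2 := by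
    have h1 : A * α ^ 2 + B * α * γ + C * γ ^ 2
        = (H : ℤ) ^ 2 * (A * α' ^ 2 + B * α' * γ' + C * γ' ^ 2) := by
      rw [hαeq, hγeq]; ring
    rw [h1] at hF0
    exact (IsCoprime.pow_right (n := 2) hcopH).dvd_of_dvd_mul_left hF0
  -- complete (α', γ') to a unimodular basis
  obtain ⟨a, b, hab⟩ := Int.isCoprime_iff_gcd_eq_one.mpr hprim
  set δ : ℤ := a with hδdef
  set β : ℤ := -b with hβdef
  have hdet : α' * δ - β * γ' = 1 := by rw [hδdef, hβdef]; linear_combination hab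
  set F1 : ℤ := A * α' ^ 2 + B * α' * γ' + C * γ' ^ 2 with hF1def
  set F2 : ℤ := A * β ^ 2 + B * β * δ + C * δ ^ 2 with hF2def
  set bb : ℤ := 2 * A * α' * β + B * (α' * δ + β * γ') + 2 * C * γ' * δ with hbbdef
  have hbbD : m ∣ bb ^ 2 - (B ^ 2 - 4 * A * C) := by
    have hid : bb ^ 2 - (B ^ 2 - 4 * A * C) = 4 * F2 * F1 := by
      rw [hbbdef, hF1def, hF2def]
      linear_combination ((B ^ 2 - 4 * A * C) * (α' * δ - β * γ' + 1)) * hdet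
    rw [hid]
    exact Dvd.dvd.mul_left hF0' (4 * F2)
  have hcopbb : IsCoprime m bb := by
    obtain ⟨k, hk⟩ := hbbD
    have hbsq : IsCoprime m (bb ^ 2) := by
      have : bb ^ 2 = (B ^ 2 - 4 * A * C) + m * k := by linarith [hk]
      rw [this]
      exact hcopD.add_mul_left_right k
    have hdvd : bb ∣ bb ^ 2 := dvd_pow_self bb (by norm_num)
    exact IsCoprime.of_isCoprime_of_dvd_right hbsq hdvd
  obtain ⟨u', w', hu'⟩ := hcopbb
  -- choose the parameter t
  set r : ℤ := ℓ - F2 with hrdef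
  set t : ℤ := w' * r with htdef
  have hbt : m ∣ bb * t - r := ⟨-(r * u'), by rw [htdef]; linear_combination r * hu'⟩
  refine ⟨α' * t + β, γ' * t + δ, ?_, ?_⟩
  · rw [← Int.isCoprime_iff_gcd_eq_one]
    exact ⟨-γ', α', by linear_combination hdet⟩
  · rw [Int.modEq_iff_dvd]
    obtain ⟨k1, hk1⟩ := hF0'
    obtain ⟨k2, hk2⟩ := hbt
    refine ⟨-(t ^ 2) * k1 - k2, ?_⟩
    have hexp : A * (α' * t + β) ^ 2 + B * (α' * t + β) * (γ' * t + δ)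
        + C * (γ' * t + δ) ^ 2 = F1 * t ^ 2 + bb * t + F2 := by
      rw [hF1def, hF2def, hbbdef]; ring
    rw [hexp]
    linear_combination (-(t ^ 2)) * hk1 - hk2 - hrdef
end

section
/- Let f(x,y) = Ax² + Bxy + Cy² be any integral binary quadratic form, let m ≥ 1 be an integer and ℓ ∈ ℤ. If there exist integers x₀, y₀ with gcd(gcd(x₀,y₀), m) = 1 and f(x₀,y₀) ≡ ℓ (mod m), then there exist coprime integers x, y (gcd(x,y) = 1) with f(x,y) ≡ ℓ (mod m). -/
/-- If a residue class mod `m` is represented by a binary quadratic form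
at a pair `(x₀,y₀)` with `gcd(gcd(x₀,y₀),m)=1`, then it is represented at a coprime pair. -/
theorem stmt_2 (A B C : ℤ) (m : ℤ) (hm : 1 ≤ m) (ℓ : ℤ)
    (h : ∃ x₀ y₀ : ℤ, Int.gcd (↑(Int.gcd x₀ y₀) : ℤ) m = 1 ∧
      A * x₀ ^ 2 + B * x₀ * y₀ + C * y₀ ^ 2 ≡ ℓ [ZMOD m]) :
    ∃ x y : ℤ, Int.gcd x y = 1 ∧ A * x ^ 2 + B * x * y + C * y ^ 2 ≡ ℓ [ZMOD m] := by
  obtain ⟨x₀, y₀, h1, h2⟩ := h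
  set g : ℤ := (Int.gcd x₀ y₀ : ℤ) with hg
  by_cases hg0 : Int.gcd x₀ y₀ = 0
  · -- then x₀ = y₀ = 0 and m = 1
    have hx0 : x₀ = 0 := (Int.gcd_eq_zero_iff.mp hg0).1
    have hy0 : y₀ = 0 := (Int.gcd_eq_zero_iff.mp hg0).2
    have hm1 : m = 1 := by
      have : Int.gcd (0 : ℤ) m = 1 := by rwa [hg, hg0] at h1; 
      have hma : m.natAbs = 1 := by simpa [Int.gcd] using this
      omega
    subst hm1
    exact ⟨1, 0, by decide, Int.modEq_one⟩
  · -- g ≠ 0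
    have hgdvdx : g ∣ x₀ := Int.gcd_dvd_left x₀ y₀
    have hgdvdy : g ∣ y₀ := Int.gcd_dvd_right x₀ y₀
    obtain ⟨a, ha⟩ := hgdvdx
    obtain ⟨c, hc⟩ := hgdvdy
    have hgne : g ≠ 0 := by rw [hg]; exact_mod_cast hg0
    have hac : Int.gcd a c = 1 := by
      have := Int.gcd_mul_left g a c
      rw [← ha, ← hc] at this
      have hgnat : g.natAbs = Int.gcd x₀ y₀ := by simp [hg]
      rw [hgnat] at this
      have hpos : 0 < Int.gcd x₀ y₀ := Nat.pos_of_ne_zero hg0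
      nlinarith [this, hpos]
    have hacc : IsCoprime a c := Int.isCoprime_iff_gcd_eq_one.mpr hac
    obtain ⟨u, v, huv⟩ := hacc
    have hgm : IsCoprime g m := Int.isCoprime_iff_gcd_eq_one.mpr h1
    obtain ⟨p, q, hpq⟩ := hgm
    refine ⟨a * g - v * m, c * g + u * m, ?_, ?_⟩
    · rw [← Int.isCoprime_iff_gcd_eq_one]
      have key : (p * u - q * c) * (a * g - v * m) +
          (p * v + q * a) * (c * g + u * m) = 1 := by
        linear_combination (p * g + q * m) * huv + hpq
      exact ⟨p * u - q * c, p * v + q * a, key⟩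
    · have hx : a * g - v * m ≡ x₀ [ZMOD m] :=
        Int.modEq_iff_dvd.mpr ⟨v, by rw [ha]; ring⟩
      have hy : c * g + u * m ≡ y₀ [ZMOD m] :=
        Int.modEq_iff_dvd.mpr ⟨-u, by rw [hc]; ring⟩
      have h3 : A * (a * g - v * m) ^ 2 + (B * (a * g - v * m) * (c * g + u * m) +
          C * (c * g + u * m) ^ 2) ≡ A * x₀ ^ 2 + (B * x₀ * y₀ + C * y₀ ^ 2) [ZMOD m] :=
        ((hx.pow 2).mul_left A).add
          ((((hx.mul_left B)).mul hy).add ((hy.pow 2).mul_left C))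
      rw [add_assoc] at h2 ⊢
      exact h3.trans h2
end

section
/- Let p be an odd prime and let (a,b,c,d) be a Descartes quadruple with p ∣ a and p ∣ b. Then c ≡ d (mod p), and the pinch polynomial satisfies f(x) ≡ c (mod p) for every integer x. -/
/-- if an odd prime `p` divides both `a` and `b` in a Descartes quadruple,
then `c ≡ d (mod p)` and the pinch polynomial is constantly `c` modulo `p`. -/
theorem stmt_4 (p : ℕ) (hp : p.Prime) (hodd : Odd p) (a b c d : ℤ)
    (hDesc : 2 * (a ^ 2 + b ^ 2 + c ^ 2 + d ^ 2) = (a + b + c + d) ^ 2)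
    (ha : (p : ℤ) ∣ a) (hb : (p : ℤ) ∣ b) :
    c ≡ d [ZMOD (p : ℤ)] ∧
      ∀ x : ℤ, (a + b) * x ^ 2 - (a + b + c - d) * x + c ≡ c [ZMOD (p : ℤ)] := by
  have hprime : Prime (p : ℤ) := Nat.prime_iff_prime_int.mp hp
  have hsq : (p : ℤ) ∣ (c - d) ^ 2 := by
    have : (c - d) ^ 2 = (a + b) * (a + b + 2 * c + 2 * d) - 2 * (a * a) - 2 * (b * b) := by
      linear_combination hDesc
    rw [this]
    exact dvd_sub (dvd_sub (Dvd.dvd.mul_right (dvd_add ha hb) _)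
      ((ha.mul_right a).mul_left 2)) ((hb.mul_right b).mul_left 2)
  have hcd : (p : ℤ) ∣ (c - d) := hprime.dvd_of_dvd_pow hsq
  have hcdm : c ≡ d [ZMOD (p : ℤ)] :=
    Int.modEq_iff_dvd.mpr (by simpa using (dvd_neg.mpr hcd))
  refine ⟨hcdm, fun x => ?_⟩
  have : (p : ℤ) ∣ ((a + b) * x ^ 2 - (a + b + c - d) * x + c - c) := by
    have h : (a + b) * x ^ 2 - (a + b + c - d) * x + c - c
        = (a + b) * (x ^ 2 - x) - (c - d) * x := by ring
    rw [h]
    exact dvd_sub ((dvd_add ha hb).mul_right _) (hcd.mul_right _)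
  exact Int.modEq_iff_dvd.mpr (by simpa using (dvd_neg.mpr this))
end

section
/- Let p be an odd prime, n ≥ 1, and m = pⁿ. Let (a,b,c,d) be a Descartes quadruple such that p ∣ a+b but not both p ∣ a and p ∣ b. Then the pinch polynomial f(x) = (a+b)x² − (a+b+c−d)x + c is surjective modulo m: for every integer ℓ there exists an integer x with f(x) ≡ ℓ (mod m). -/
lemma unit_of_not_dvd (p : ℕ) (hp : p.Prime) (n : ℕ) (hn : 1 ≤ n) (z : ℤ)
    (hz : ¬ (p : ℤ) ∣ z) : IsUnit (z : ZMod (p ^ n)) := by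
  haveI : NeZero (p ^ n) := ⟨pow_ne_zero n hp.ne_zero⟩
  set w : ZMod (p ^ n) := (z : ZMod (p ^ n)) with hw
  have hwv : ((w.val : ℕ) : ZMod (p ^ n)) = w := by
    rw [ZMod.natCast_val, ZMod.cast_id]
  have hzd : ((p : ℤ) ^ n) ∣ z - (w.val : ℤ) := by
    have : ((z - (w.val : ℤ) : ℤ) : ZMod (p ^ n)) = 0 := by
      push_cast
      rw [hwv, hw, sub_self]
    rw [← Nat.cast_pow]
    exact (ZMod.intCast_zmod_eq_zero_iff_dvd _ _).mp (by exact_mod_cast this)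
  have hpz : ¬ (p : ℤ) ∣ (w.val : ℤ) := by
    intro h
    apply hz
    have hpd : (p : ℤ) ∣ z - (w.val : ℤ) :=
      (dvd_pow_self (p : ℤ) (by omega : n ≠ 0)).trans hzd
    have := dvd_add hpd h
    simpa using this
  have hpn : ¬ p ∣ w.val := by
    intro h; exact hpz (by exact_mod_cast h)
  rw [← hwv]
  rw [ZMod.isUnit_iff_coprime]
  exact Nat.Coprime.pow_right n ((hp.coprime_iff_not_dvd.mpr hpn).symm)

/-- if `p ∣ a+b` but not both of `a,b`, the pinch polynomial of a Descartes
quadruple is surjective modulo `m = pⁿ`. -/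
theorem stmt_5 (p : ℕ) (hp : p.Prime) (hodd : Odd p) (n : ℕ) (hn : 1 ≤ n)
    (a b c d : ℤ)
    (hDesc : 2 * (a ^ 2 + b ^ 2 + c ^ 2 + d ^ 2) = (a + b + c + d) ^ 2)
    (hab : (p : ℤ) ∣ (a + b)) (hnot : ¬ ((p : ℤ) ∣ a ∧ (p : ℤ) ∣ b)) :
    ∀ ℓ : ℤ, ∃ x : ℤ,
      (a + b) * x ^ 2 - (a + b + c - d) * x + c ≡ ℓ [ZMOD ((p : ℤ) ^ n)] := by
  haveI : NeZero (p ^ n) := ⟨pow_ne_zero n hp.ne_zero⟩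
  have hpZ : Prime (p : ℤ) := Nat.prime_iff_prime_int.mp hp
  set u : ℤ := a + b + c - d with hu_def
  -- u is not divisible by p
  have hu : ¬ (p : ℤ) ∣ u := by
    intro h
    have hcd : (p : ℤ) ∣ c - d := by
      have h2 := dvd_sub h hab
      have he : a + b + c - d - (a + b) = c - d := by ring
      rwa [hu_def, he] at h2
    have hkey : 2 * (a + b) * (c + d) = (a - b) ^ 2 + (c - d) ^ 2 := by
      linear_combination -hDesc
    have hab2 : (p : ℤ) ∣ (a - b) ^ 2 := by
      have h1 : (p : ℤ) ∣ 2 * (a + b) * (c + d) := (hab.mul_left 2).mul_right (c + d)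
      have h2 : (p : ℤ) ∣ (c - d) ^ 2 := dvd_pow hcd two_ne_zero
      have := dvd_sub h1 h2
      rw [hkey] at this
      simpa using this
    have habm : (p : ℤ) ∣ a - b := hpZ.dvd_of_dvd_pow hab2
    have h2a : (p : ℤ) ∣ 2 * a := by
      have := dvd_add hab habm; rw [show (2:ℤ) * a = a + b + (a - b) by ring]; exact this
    have h2b : (p : ℤ) ∣ 2 * b := by
      have := dvd_sub hab habm; rw [show (2:ℤ) * b = a + b - (a - b) by ring]; exact this
    have hp2 : ¬ (p : ℤ) ∣ 2 := by
      intro h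
      have : p ∣ 2 := by exact_mod_cast h
      have hp2 := (Nat.prime_dvd_prime_iff_eq hp Nat.prime_two).mp this
      rw [hp2] at hodd
      exact (by decide : ¬ Odd 2) hodd
    exact hnot ⟨(hpZ.dvd_mul.mp h2a).resolve_left hp2, (hpZ.dvd_mul.mp h2b).resolve_left hp2⟩
  -- the polynomial map on ZMod (p^n)
  set N := p ^ n with hN
  set g : ZMod N → ZMod N := fun x => (a + b : ℤ) * x ^ 2 - (u : ZMod N) * x + (c : ℤ) with hg
  have hginj : Function.Injective g := by
    intro x y hxy
    have hfac : (x - y) * ((a + b : ℤ) * (x + y) - (u : ZMod N)) = 0 := by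
      have : g x - g y = 0 := by rw [hxy, sub_self]
      rw [hg] at this
      linear_combination this
    have hunit : IsUnit ((a + b : ℤ) * (x + y) - (u : ZMod N)) := by
      set s : ZMod N := x + y with hs
      have hsv : ((s.val : ℕ) : ZMod N) = s := by
        rw [ZMod.natCast_val, ZMod.cast_id]
      have : ((a + b : ℤ) * (x + y) - (u : ZMod N)) = (((a + b) * (s.val : ℤ) - u : ℤ) : ZMod N) := by
        push_cast
        rw [hsv, hs]
      rw [this]
      apply unit_of_not_dvd p hp n hn
      intro h
      have : (p : ℤ) ∣ u := by
        have h1 : (p : ℤ) ∣ (a + b) * (s.val : ℤ) := hab.mul_right _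
        have := dvd_sub h1 h
        simpa using this
      exact hu this
    exact sub_eq_zero.mp (hunit.mul_left_eq_zero.mp hfac)
  have hgsurj : Function.Surjective g := Finite.surjective_of_injective hginj
  intro ℓ
  obtain ⟨y, hy⟩ := hgsurj (ℓ : ZMod N)
  refine ⟨(y.val : ℤ), ?_⟩
  have hyv : ((y.val : ℕ) : ZMod N) = y := by
    rw [ZMod.natCast_val, ZMod.cast_id]
  have : (((a + b) * (y.val : ℤ) ^ 2 - u * (y.val : ℤ) + c : ℤ) : ZMod N) = (ℓ : ZMod N) := by
    rw [← hy, hg]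
    push_cast
    rw [hyv]
  have hmod := (ZMod.intCast_eq_intCast_iff _ _ _).mp this
  have hNcast : ((N : ℕ) : ℤ) = (p : ℤ) ^ n := by push_cast [hN]; ring
  rw [hNcast] at hmod
  exact hmod
end

section
/- Assume Bunyakovsky's conjecture for quadratics. Let (a,b,c,d) be a primitive Descartes quadruple with a+b > 0, with ab not a perfect square, and with c odd, and let f(x) = (a+b)x² − (a+b+c−d)x + c be its pinch polynomial. Let m > 1 be an integer coprime to 6, and let ℓ be an integer with gcd(ℓ, m) = 1 such that f(x₀) ≡ ℓ (mod m) for some integer x₀. Then the set of integers x such that f(x) is prime and f(x) ≡ ℓ (mod m) is infinite. -/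
/-- Bunyakovsky's conjecture for quadratic polynomials: every quadratic `g ∈ ℤ[x]` with
positive leading coefficient, irreducible over `ℚ`, whose values at positive integers have
no common prime factor, takes prime values at infinitely many positive integers. -/
def BunyakovskyQuadratic : Prop :=
  ∀ g : Polynomial ℤ, g.natDegree = 2 → 0 < g.leadingCoeff →
    Irreducible (g.map (Int.castRingHom ℚ)) →
    (∀ q : ℕ, q.Prime → ∃ n : ℕ, 0 < n ∧ ¬ ((q : ℤ) ∣ g.eval (n : ℤ))) →
    {n : ℕ | 0 < n ∧ Prime (g.eval (n : ℤ))}.Infinite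

open Polynomial in
/-- assuming Bunyakovsky, a pinch polynomial of a primitive Descartes quadruple
(with `a+b>0`, `ab` not a square, `c` odd) takes infinitely many prime values in any
invertible residue class mod `m` (coprime to 6) that it attains. -/
theorem stmt_7 (hBun : BunyakovskyQuadratic)
    (a b c d : ℤ)
    (hDesc : 2 * (a ^ 2 + b ^ 2 + c ^ 2 + d ^ 2) = (a + b + c + d) ^ 2)
    (hprim : Int.gcd (Int.gcd (Int.gcd a b : ℤ) c : ℤ) d = 1)
    (hab : 0 < a + b) (hsq : ¬ IsSquare (a * b)) (hc : Odd c)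
    (m : ℤ) (hm : 1 < m) (hm6 : Int.gcd m 6 = 1)
    (ℓ : ℤ) (hℓ : Int.gcd ℓ m = 1)
    (hrep : ∃ x₀ : ℤ, (a + b) * x₀ ^ 2 - (a + b + c - d) * x₀ + c ≡ ℓ [ZMOD m]) :
    {x : ℤ | Prime ((a + b) * x ^ 2 - (a + b + c - d) * x + c) ∧
      (a + b) * x ^ 2 - (a + b + c - d) * x + c ≡ ℓ [ZMOD m]}.Infinite := by
  obtain ⟨x₀, hx₀⟩ := hrep
  have habne : a + b ≠ 0 := hab.ne'
  have hm0 : m ≠ 0 := by omega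
  have hdisc : (a + b + c - d) ^ 2 - 4 * (a + b) * c = 4 * (a * b) := by
    linear_combination hDesc
  set f : ℤ[X] := C (a + b) * X ^ 2 + C (-(a + b + c - d)) * X + C c with hf
  set g : ℤ[X] := f.comp (C m * X + C x₀) with hg
  have hfeval : ∀ t : ℤ, f.eval t = (a + b) * t ^ 2 - (a + b + c - d) * t + c := by
    intro t; simp [hf]; ring
  have hgeval : ∀ t : ℤ, g.eval t =
      (a + b) * (m * t + x₀) ^ 2 - (a + b + c - d) * (m * t + x₀) + c := by
    intro t; rw [hg, eval_comp, hfeval]; simp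
  have hfd : f.natDegree = 2 := natDegree_quadratic habne
  have hld : (C m * X + C x₀).natDegree = 1 := natDegree_linear hm0
  have hgd : g.natDegree = 2 := by rw [hg, natDegree_comp, hfd, hld, mul_one]
  have hglc : 0 < g.leadingCoeff := by
    rw [hg, leadingCoeff_comp (by rw [hld]; norm_num), leadingCoeff_quadratic habne,
      leadingCoeff_linear hm0, hfd]
    have : (0:ℤ) < m := by omega
    positivity
  -- congruence facts
  have hFcong : ∀ x y : ℤ, x ≡ y [ZMOD m] →
      (a + b) * x ^ 2 - (a + b + c - d) * x + c ≡
        (a + b) * y ^ 2 - (a + b + c - d) * y + c [ZMOD m] := by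
    intro x y h
    exact (((h.pow 2).mul_left (a + b)).sub (h.mul_left (a + b + c - d))).add_right c
  have hshift : ∀ n : ℤ, m * n + x₀ ≡ x₀ [ZMOD m] := by
    intro n
    exact Int.ModEq.symm (Int.modEq_iff_dvd.mpr ⟨n, by ring⟩)
  -- irreducibility over ℚ
  have hirr : Irreducible (g.map (Int.castRingHom ℚ)) := by
    have hmapd : (g.map (Int.castRingHom ℚ)).natDegree = 2 := by
      rw [natDegree_map_eq_of_injective (by exact Int.cast_injective) g, hgd]
    rw [irreducible_iff_roots_eq_zero_of_degree_le_three (by omega) (by omega),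
      Multiset.eq_zero_iff_forall_notMem]
    intro t ht
    have hne : g.map (Int.castRingHom ℚ) ≠ 0 := by
      intro h0; rw [h0] at hmapd; simp at hmapd
    rw [mem_roots hne, IsRoot] at ht
    have heval : ((a:ℚ) + b) * ((m:ℚ) * t + x₀) ^ 2
        - ((a:ℚ) + b + c - d) * ((m:ℚ) * t + x₀) + c = 0 := by
      rw [← ht, hg, hf]
      simp [eval_comp]
      push_cast
      ring
    have hdiscQ : ((a:ℚ) + b + c - d) ^ 2 - 4 * ((a:ℚ) + b) * c = 4 * ((a:ℚ) * b) := by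
      exact_mod_cast hdisc
    set s : ℚ := 2 * ((a:ℚ) + b) * ((m:ℚ) * t + x₀) - ((a:ℚ) + b + c - d) with hs
    have hs2 : s * s = ((4 * (a * b) : ℤ) : ℚ) := by
      push_cast
      rw [hs]
      linear_combination 4 * ((a:ℚ) + b) * heval + hdiscQ
    have : IsSquare ((4 * (a * b) : ℤ)) := by
      rw [← Rat.isSquare_intCast_iff]
      exact ⟨s, hs2.symm⟩
    obtain ⟨k, hk⟩ := this
    have hkeven : Even k := by
      rcases Int.even_or_odd k with h | h
      · exact h
      · obtain ⟨j, rfl⟩ := h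
        exfalso
        have h2 : 4 * (j * j + j) + 1 = 4 * (a * b) := by linear_combination -hk
        generalize j * j + j = J at h2
        generalize a * b = P at h2
        omega
    obtain ⟨j, rfl⟩ := hkeven
    exact hsq ⟨j, by linarith⟩
  -- no fixed prime divisor
  have hnofix : ∀ q : ℕ, q.Prime → ∃ n : ℕ, 0 < n ∧ ¬ ((q : ℤ) ∣ g.eval (n : ℤ)) := by
    intro q hq
    by_cases hqm : (q : ℤ) ∣ m
    · refine ⟨1, one_pos, fun hdvd => ?_⟩
      have h1 : g.eval 1 ≡ ℓ [ZMOD m] := by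
        rw [hgeval]
        exact (hFcong _ _ (hshift 1)).trans hx₀
      have hqℓ : (q : ℤ) ∣ ℓ := by
        have h2 : g.eval 1 ≡ ℓ [ZMOD (q:ℤ)] := h1.of_dvd hqm
        have h3 : (q:ℤ) ∣ ℓ - g.eval 1 := Int.ModEq.dvd h2
        simpa using dvd_add h3 hdvd
      have h4 : (q : ℤ) ∣ (Int.gcd ℓ m : ℤ) := Int.dvd_coe_gcd hqℓ hqm
      rw [hℓ] at h4
      have h5 : q ∣ 1 := by exact_mod_cast h4
      exact hq.one_lt.ne' (Nat.dvd_one.mp h5)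
    · haveI : Fact q.Prime := ⟨hq⟩
      have hqZ : Prime (q : ℤ) := Nat.prime_iff_prime_int.mp hq
      -- find a residue where f is nonzero mod q
      obtain ⟨z, hz⟩ : ∃ z : ZMod q, ((a + b : ℤ) : ZMod q) * z ^ 2
          - ((a + b + c - d : ℤ) : ZMod q) * z + ((c : ℤ) : ZMod q) ≠ 0 := by
        by_cases hq2 : q = 2
        · subst hq2
          refine ⟨0, fun h0 => ?_⟩
          have hdc : ¬ ((2:ℕ):ℤ) ∣ c := by rw [Int.odd_iff] at hc; omega
          apply hdc
          rw [← ZMod.intCast_zmod_eq_zero_iff_dvd]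
          linear_combination h0
        · by_contra hall
          push_neg at hall
          have hC : ((c : ℤ) : ZMod q) = 0 := by have := hall 0; simpa using this
          have h1 := hall 1
          have h1' := hall (-1)
          have htwo : (2 : ZMod q) ≠ 0 := by
            intro h2
            have : ((2:ℕ) : ZMod q) = 0 := by exact_mod_cast h2
            rw [ZMod.natCast_eq_zero_iff] at this
            exact hq2 ((Nat.prime_dvd_prime_iff_eq hq Nat.prime_two).mp this)
          have hA : ((a + b : ℤ) : ZMod q) = 0 := by
            have hsum : 2 * ((a + b : ℤ) : ZMod q) = 0 := by
              have := h1; have := h1'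
              linear_combination h1 + h1' - 2 * hC
            exact (mul_eq_zero.mp hsum).resolve_left htwo
          have hB : ((a + b + c - d : ℤ) : ZMod q) = 0 := by
            linear_combination hA + hC - h1
          rw [ZMod.intCast_zmod_eq_zero_iff_dvd] at hA hB hC
          have hd : (q : ℤ) ∣ d := by
            have : d = ((a + b) + c) - (a + b + c - d) := by ring
            rw [this]
            exact dvd_sub (dvd_add hA hC) hB
          have h5 : (q:ℤ) ∣ (a + b + c + d) := dvd_add (dvd_add hA hC) hd
          have habsq : (q : ℤ) ∣ (a - b) ^ 2 := by
            have hid : (a - b) ^ 2 = (a + b + c + d) ^ 2 - (a + b) ^ 2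
                - 2 * c ^ 2 - 2 * d ^ 2 := by linear_combination hDesc
            rw [hid]
            exact dvd_sub (dvd_sub (dvd_sub (dvd_pow h5 two_ne_zero)
              (dvd_pow hA two_ne_zero)) ((dvd_pow hC two_ne_zero).mul_left 2))
              ((dvd_pow hd two_ne_zero).mul_left 2)
          have hqab : (q:ℤ) ∣ (a - b) := hqZ.dvd_of_dvd_pow habsq
          have hq2' : ¬ (q:ℤ) ∣ 2 := by
            intro h2
            have h2' : q ∣ 2 := by exact_mod_cast h2
            exact hq2 ((Nat.prime_dvd_prime_iff_eq hq Nat.prime_two).mp h2')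
          have ha' : (q:ℤ) ∣ a := by
            have h2a : (q:ℤ) ∣ 2 * a := by
              have he : 2 * a = (a + b) + (a - b) := by ring
              rw [he]; exact dvd_add hA hqab
            exact (hqZ.dvd_mul.mp h2a).resolve_left hq2'
          have hb' : (q:ℤ) ∣ b := by
            have he : b = (a + b) - a := by ring
            rw [he]; exact dvd_sub hA ha'
          have hg1 : (q:ℤ) ∣ (Int.gcd a b : ℤ) := Int.dvd_coe_gcd ha' hb'
          have hg2 : (q:ℤ) ∣ (Int.gcd (Int.gcd a b : ℤ) c : ℤ) := Int.dvd_coe_gcd hg1 hC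
          have hg3 : (q:ℤ) ∣ (Int.gcd (Int.gcd (Int.gcd a b : ℤ) c : ℤ) d : ℤ) :=
            Int.dvd_coe_gcd hg2 hd
          rw [hprim] at hg3
          have h7 : q ∣ 1 := by exact_mod_cast hg3
          exact hq.one_lt.ne' (Nat.dvd_one.mp h7)
      -- choose n hitting residue z
      have hmz : ((m : ℤ) : ZMod q) ≠ 0 := by
        rw [ne_eq, ZMod.intCast_zmod_eq_zero_iff_dvd]; exact hqm
      set w : ZMod q := ((m : ℤ) : ZMod q)⁻¹ * (z - ((x₀ : ℤ) : ZMod q)) with hw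
      refine ⟨w.val + q, by have := hq.pos; omega, fun hdvd => ?_⟩
      have hcast : ((m * ((w.val + q : ℕ) : ℤ) + x₀ : ℤ) : ZMod q) = z := by
        push_cast
        rw [show ((w.val : ℕ) : ZMod q) = w from ZMod.natCast_rightInverse w,
          ZMod.natCast_self, add_zero, hw, mul_inv_cancel_left₀ hmz]
        ring
      have hval : (((a + b) * (m * ((w.val + q : ℕ) : ℤ) + x₀) ^ 2
            - (a + b + c - d) * (m * ((w.val + q : ℕ) : ℤ) + x₀) + c : ℤ) : ZMod q)
          = ((a + b : ℤ) : ZMod q) * z ^ 2 - ((a + b + c - d : ℤ) : ZMod q) * z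
            + ((c : ℤ) : ZMod q) := by
        push_cast at hcast ⊢
        rw [hcast]
      apply hz
      rw [← hval, ZMod.intCast_zmod_eq_zero_iff_dvd]
      rw [hgeval] at hdvd
      exact hdvd
  -- conclude
  have hS := hBun g hgd hglc hirr hnofix
  have hinj : Set.InjOn (fun n : ℕ => m * (n : ℤ) + x₀) {n : ℕ | 0 < n ∧ Prime (g.eval (n : ℤ))} := by
    intro n₁ _ n₂ _ h
    simp only at h
    have h2 : (n₁ : ℤ) = n₂ := mul_left_cancel₀ hm0 (by linarith)
    exact_mod_cast h2
  refine Set.Infinite.mono ?_ (hS.image hinj)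
  rintro x ⟨n, ⟨hn, hp⟩, rfl⟩
  simp only [Set.mem_setOf_eq]
  constructor
  · rw [hgeval] at hp; exact hp
  · exact (hFcong _ _ (hshift n)).trans hx₀
end

section
/- Let (a,b,c,d) be a primitive Descartes quadruple with a+b > 0, with ab not a perfect square, and with c odd. Then the pinch polynomial f(x) = (a+b)x² − (a+b+c−d)x + c has positive leading coefficient, is irreducible over ℚ, and for every prime q there exists an integer n with q ∤ f(n). -/
/-- for a primitive Descartes quadruple with `a+b>0`, `ab` not a square and
`c` odd, the pinch polynomial has positive leading coefficient, is irreducible over `ℚ`,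
and has no fixed prime divisor. -/
theorem stmt_8 (a b c d : ℤ)
    (hDesc : 2 * (a ^ 2 + b ^ 2 + c ^ 2 + d ^ 2) = (a + b + c + d) ^ 2)
    (hprim : Int.gcd (Int.gcd (Int.gcd a b : ℤ) c : ℤ) d = 1)
    (hab : 0 < a + b) (hsq : ¬ IsSquare (a * b)) (hc : Odd c) :
    0 < a + b ∧
    Irreducible (Polynomial.C ((a : ℚ) + b) * Polynomial.X ^ 2
        - Polynomial.C ((a : ℚ) + b + c - d) * Polynomial.X + Polynomial.C (c : ℚ)) ∧
    (∀ q : ℕ, q.Prime → ∃ n : ℤ,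
      ¬ ((q : ℤ) ∣ ((a + b) * n ^ 2 - (a + b + c - d) * n + c))) := by
  have key : (a + b + c - d) ^ 2 - 4 * (a + b) * c = 4 * (a * b) := by
    linear_combination hDesc
  have hA : ((a : ℚ) + b) ≠ 0 := by
    have : (0 : ℚ) < (a : ℚ) + b := by exact_mod_cast hab
    linarith
  refine ⟨hab, ?_, ?_⟩
  · -- irreducibility
    set p : Polynomial ℚ := Polynomial.C ((a : ℚ) + b) * Polynomial.X ^ 2
        - Polynomial.C ((a : ℚ) + b + c - d) * Polynomial.X + Polynomial.C (c : ℚ) with hp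
    have hpform : p = Polynomial.C ((a : ℚ) + b) * Polynomial.X ^ 2
        + Polynomial.C (-((a : ℚ) + b + c - d)) * Polynomial.X + Polynomial.C (c : ℚ) := by
      rw [hp, sub_eq_add_neg, ← neg_mul, ← Polynomial.C_neg]
    have hdeg : p.natDegree = 2 := by
      rw [hpform]; exact Polynomial.natDegree_quadratic hA
    rw [Polynomial.irreducible_iff_roots_eq_zero_of_degree_le_three (by omega) (by omega)]
    rw [Multiset.eq_zero_iff_forall_notMem]
    intro x hx
    have hp0 : p ≠ 0 := fun h => by simp [h] at hdeg
    rw [Polynomial.mem_roots hp0, Polynomial.IsRoot] at hx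
    rw [hp] at hx
    simp only [Polynomial.eval_add, Polynomial.eval_sub, Polynomial.eval_mul,
      Polynomial.eval_pow, Polynomial.eval_C, Polynomial.eval_X] at hx
    have hev : ((a : ℚ) + b) * (x * x) + (-((a : ℚ) + b + c - d)) * x + (c : ℚ) = 0 := by
      linear_combination hx
    have hnosq : ∀ s : ℚ, discrim ((a : ℚ) + b) (-((a : ℚ) + b + c - d)) (c : ℚ) ≠ s ^ 2 := by
      intro s hs
      apply hsq
      rw [← Rat.isSquare_intCast_iff]
      have keyQ : ((a : ℚ) + b + c - d) ^ 2 - 4 * ((a : ℚ) + b) * c = 4 * ((a : ℚ) * b) := by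
        exact_mod_cast key
      have hd4 : discrim ((a : ℚ) + b) (-((a : ℚ) + b + c - d)) (c : ℚ)
          = 4 * ((a : ℚ) * b) := by
        rw [discrim]; linear_combination keyQ
      have h4 : 4 * ((a : ℚ) * b) = s ^ 2 := by rw [← hd4, hs]
      refine ⟨s / 2, ?_⟩
      push_cast
      field_simp
      linear_combination h4
    exact quadratic_ne_zero_of_discrim_ne_sq hnosq x hev
  · -- no fixed prime divisor
    intro q hq
    by_cases hq2 : q = 2
    · refine ⟨0, ?_⟩
      intro h
      have h2 : (2 : ℤ) ∣ c := by
        have : (q : ℤ) ∣ c := by simpa using h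
        rw [hq2] at this; exact_mod_cast this
      rcases hc with ⟨k, hk⟩
      omega
    · have hqn2 : ¬ (q : ℤ) ∣ 2 := by
        intro h
        have h' : q ∣ 2 := by exact_mod_cast h
        exact hq2 ((Nat.prime_dvd_prime_iff_eq hq Nat.prime_two).mp h')
      have hqp : Prime (q : ℤ) := Nat.prime_iff_prime_int.mp hq
      by_cases hcq : (q : ℤ) ∣ c
      · by_cases hdq : (q : ℤ) ∣ d
        · by_cases habq : (q : ℤ) ∣ (a + b)
          · -- contradiction with primitivity
            exfalso
            have key2 : (a - b) ^ 2 = 2 * (a + b) * (c + d) + 2 * (c * d) - c ^ 2 - d ^ 2 := by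
              linear_combination hDesc
            have hdvd : (q : ℤ) ∣ (a - b) ^ 2 := by
              rw [key2]
              have h1 : (q : ℤ) ∣ 2 * (a + b) * (c + d) := (habq.mul_left 2).mul_right _
              have h2 : (q : ℤ) ∣ 2 * (c * d) := by
                rcases hcq with ⟨k, hk⟩; exact ⟨2 * k * d, by rw [hk]; ring⟩
              have h3 : (q : ℤ) ∣ c ^ 2 := by rw [sq]; exact hcq.mul_right c
              have h4 : (q : ℤ) ∣ d ^ 2 := by rw [sq]; exact hdq.mul_right d
              exact dvd_sub (dvd_sub (dvd_add h1 h2) h3) h4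
            have hab2 : (q : ℤ) ∣ (a - b) := Int.Prime.dvd_pow' hq hdvd
            have h2a : (q : ℤ) ∣ 2 * a := by
              have h := dvd_add habq hab2
              have e : (a + b) + (a - b) = 2 * a := by ring
              rwa [e] at h
            have h2b : (q : ℤ) ∣ 2 * b := by
              have h := dvd_sub habq hab2
              have e : (a + b) - (a - b) = 2 * b := by ring
              rwa [e] at h
            have haq : (q : ℤ) ∣ a := (hqp.dvd_mul.mp h2a).resolve_left hqn2
            have hbq : (q : ℤ) ∣ b := (hqp.dvd_mul.mp h2b).resolve_left hqn2
            have g1 : (q : ℤ) ∣ (Int.gcd a b : ℤ) := Int.dvd_coe_gcd haq hbq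
            have g2 : (q : ℤ) ∣ (Int.gcd (Int.gcd a b : ℤ) c : ℤ) := Int.dvd_coe_gcd g1 hcq
            have g3 : (q : ℤ) ∣ (Int.gcd (Int.gcd (Int.gcd a b : ℤ) c : ℤ) d : ℤ) :=
              Int.dvd_coe_gcd g2 hdq
            rw [hprim] at g3
            have : q ≤ 1 := by exact_mod_cast Int.le_of_dvd one_pos g3
            have h2le := hq.two_le
            omega
          · refine ⟨-1, ?_⟩
            intro h
            apply habq
            have hval : (a + b) * (-1) ^ 2 - (a + b + c - d) * (-1) + c
                = 2 * (a + b) + 2 * c - d := by ring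
            rw [hval] at h
            have h2c : (q : ℤ) ∣ 2 * c := hcq.mul_left 2
            have h2ab : (q : ℤ) ∣ 2 * (a + b) := by
              have h' : (q : ℤ) ∣ (2 * (a + b) + 2 * c - d) + d - 2 * c :=
                dvd_sub (dvd_add h hdq) h2c
              have e : (2 * (a + b) + 2 * c - d) + d - 2 * c = 2 * (a + b) := by ring
              rwa [e] at h'
            exact (hqp.dvd_mul.mp h2ab).resolve_left hqn2
        · refine ⟨1, ?_⟩
          intro h
          apply hdq
          have hval : (a + b) * 1 ^ 2 - (a + b + c - d) * 1 + c = d := by ring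
          rwa [hval] at h
      · refine ⟨0, ?_⟩
        intro h
        apply hcq
        simpa using h
end

section
/- Let i ≠ j be indices in {1,2,3,4} and let s ≥ 1 be an integer. Then the s-term swap product W_{ji}(s) agrees with the 4×4 identity matrix in all rows other than rows i and j, and: if s is odd, then row i of W_{ji}(s) has entry −s in column i, entry s+1 in column j, and entry s(s+1) in the other two columns, while row j has entry −(s−1) in column i, entry s in column j, and entry s(s−1) in the other two columns; if s is even, then row i of W_{ji}(s) has entry −(s−1) in column i, entry s in column j, and entry s(s−1) in the other two columns, while row j has entry −s in column i, entry s+1 in column j, and entry s(s+1) in the other two columns. -/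
/-- The Apollonian group generator `Sᵢ` (0-indexed: `ApGen i` is `S_{i+1}`): the 4×4 integer
matrix agreeing with the identity except in row `i`, whose diagonal entry is `-1` and whose
other entries are `2`. -/
def ApGen (i : Fin 4) : Matrix (Fin 4) (Fin 4) ℤ :=
  Matrix.of fun r c => if r = i then (if c = i then -1 else 2) else (if r = c then 1 else 0)

/-- The `s`-term swap product `W_{ji}(s)` (0-indexed `i`, `j`): the `s`-letter alternating
product of `S_j` and `S_i` whose `k`-th factor from the right is `S_i` for odd `k` and `S_j`
for even `k`. -/
def SwapProd (j i : Fin 4) : ℕ → Matrix (Fin 4) (Fin 4) ℤ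
  | 0 => 1
  | s + 1 => (if (s + 1) % 2 = 1 then ApGen i else ApGen j) * SwapProd j i s

/-- Closed form for the swap product `W_{ji}(s)`. -/
def Mfun (i j : Fin 4) (s : ℕ) : Matrix (Fin 4) (Fin 4) ℤ :=
  Matrix.of fun r c =>
    if r = i then
      if s % 2 = 1 then (if c = i then -(s:ℤ) else if c = j then (s:ℤ)+1 else (s:ℤ)*((s:ℤ)+1))
      else (if c = i then -((s:ℤ)-1) else if c = j then (s:ℤ) else (s:ℤ)*((s:ℤ)-1))
    else if r = j then
      if s % 2 = 1 then (if c = i then -((s:ℤ)-1) else if c = j then (s:ℤ) else (s:ℤ)*((s:ℤ)-1))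
      else (if c = i then -(s:ℤ) else if c = j then (s:ℤ)+1 else (s:ℤ)*((s:ℤ)+1))
    else if r = c then 1 else 0

lemma apGen_mul_apply (k : Fin 4) (M : Matrix (Fin 4) (Fin 4) ℤ) (r c : Fin 4) :
    (ApGen k * M) r c = if r = k then 2 * (∑ x, M x c) - 3 * M k c else M r c := by
  rw [Matrix.mul_apply]
  by_cases h : r = k
  · subst h
    simp only [ApGen, Matrix.of_apply, if_pos rfl, if_true]
    have key : ∀ x : Fin 4, (if x = r then (-1:ℤ) else 2) * M x c
        = 2 * M x c - (if x = r then 3 * M x c else 0) := by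
      intro x; by_cases hx : x = r <;> simp [hx] <;> ring
    rw [Finset.sum_congr rfl (fun x _ => key x), Finset.sum_sub_distrib, ← Finset.mul_sum,
      Finset.sum_ite_eq' Finset.univ r (fun x => 3 * M x c)]
    simp
  · simp [ApGen, h, ite_mul, Finset.sum_ite_eq]

lemma mfun_row (i j : Fin 4) (s : ℕ) (r c : Fin 4) (h1 : r ≠ i) (h2 : r ≠ j) :
    Mfun i j s r c = if r = c then 1 else 0 := by simp [Mfun, h1, h2]

lemma mfun_colsum (i j : Fin 4) (hij : i ≠ j) (s : ℕ) (c : Fin 4) :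
    ∑ x, Mfun i j s x c
      = Mfun i j s i c + Mfun i j s j c + (if c = i ∨ c = j then 0 else 1) := by
  have hjm : j ∈ Finset.univ.erase i := Finset.mem_erase.mpr ⟨hij.symm, Finset.mem_univ j⟩
  rw [← Finset.add_sum_erase _ _ (Finset.mem_univ i), ← Finset.add_sum_erase _ _ hjm]
  have h2 : ∑ x ∈ (Finset.univ.erase i).erase j, Mfun i j s x c
      = ∑ x ∈ (Finset.univ.erase i).erase j, (if x = c then (1:ℤ) else 0) := by
    refine Finset.sum_congr rfl fun x hx => ?_
    rw [Finset.mem_erase, Finset.mem_erase] at hx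
    exact mfun_row i j s x c hx.2.1 hx.1
  rw [h2, Finset.sum_ite_eq' _ c (fun _ => (1:ℤ))]
  by_cases hci : c = i <;> by_cases hcj : c = j <;>
    simp [Finset.mem_erase, hci, hcj, hij, Ne.symm] <;> ring

lemma mfun_step (i j : Fin 4) (hij : i ≠ j) (s : ℕ) :
    (if (s + 1) % 2 = 1 then ApGen i else ApGen j) * Mfun i j s = Mfun i j (s + 1) := by
  have hji : j ≠ i := hij.symm
  rcases Nat.even_or_odd s with hp | hp
  · have h0 : s % 2 = 0 := Nat.even_iff.mp hp
    have h1 : (s + 1) % 2 = 1 := by omega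
    rw [if_pos h1]
    ext r c
    rw [apGen_mul_apply, mfun_colsum i j hij s c]
    by_cases hri : r = i <;> by_cases hrj : r = j <;>
      by_cases hci : c = i <;> by_cases hcj : c = j <;>
      simp [Mfun, h0, h1, hij, hji, hri, hrj, hci, hcj] <;> push_cast <;> ring
  · have h0 : s % 2 = 1 := Nat.odd_iff.mp hp
    have h1 : (s + 1) % 2 = 0 := by omega
    rw [if_neg (by omega)]
    ext r c
    rw [apGen_mul_apply, mfun_colsum i j hij s c]
    by_cases hri : r = i <;> by_cases hrj : r = j <;>
      by_cases hci : c = i <;> by_cases hcj : c = j <;>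
      simp [Mfun, h0, h1, hij, hji, hri, hrj, hci, hcj] <;> push_cast <;> ring

lemma mfun_zero (i j : Fin 4) : Mfun i j 0 = 1 := by
  ext r c
  by_cases hri : r = i <;> by_cases hrj : r = j <;>
    by_cases hci : c = i <;> by_cases hcj : c = j <;>
    simp_all [Mfun, Matrix.one_apply] <;> omega

lemma swapProd_eq_mfun (i j : Fin 4) (hij : i ≠ j) (s : ℕ) :
    SwapProd j i s = Mfun i j s := by
  induction s with
  | zero => rw [show SwapProd j i 0 = 1 from rfl, mfun_zero]
  | succ s ih => rw [SwapProd, ih, mfun_step i j hij s]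

/-- explicit form of the entries of the `s`-term swap product `W_{ji}(s)`. -/
theorem stmt_9 (i j : Fin 4) (hij : i ≠ j) (s : ℕ) (hs : 1 ≤ s) :
    (∀ r : Fin 4, r ≠ i → r ≠ j → ∀ col : Fin 4,
        SwapProd j i s r col = if r = col then 1 else 0) ∧
    (Odd s →
      SwapProd j i s i i = -(s : ℤ) ∧
      SwapProd j i s i j = (s : ℤ) + 1 ∧
      (∀ col : Fin 4, col ≠ i → col ≠ j →
        SwapProd j i s i col = (s : ℤ) * ((s : ℤ) + 1)) ∧
      SwapProd j i s j i = -((s : ℤ) - 1) ∧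
      SwapProd j i s j j = (s : ℤ) ∧
      (∀ col : Fin 4, col ≠ i → col ≠ j →
        SwapProd j i s j col = (s : ℤ) * ((s : ℤ) - 1))) ∧
    (Even s →
      SwapProd j i s i i = -((s : ℤ) - 1) ∧
      SwapProd j i s i j = (s : ℤ) ∧
      (∀ col : Fin 4, col ≠ i → col ≠ j →
        SwapProd j i s i col = (s : ℤ) * ((s : ℤ) - 1)) ∧
      SwapProd j i s j i = -(s : ℤ) ∧
      SwapProd j i s j j = (s : ℤ) + 1 ∧
      (∀ col : Fin 4, col ≠ i → col ≠ j →
        SwapProd j i s j col = (s : ℤ) * ((s : ℤ) + 1))) := by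
  rw [swapProd_eq_mfun i j hij s]
  have hji : j ≠ i := hij.symm
  refine ⟨?_, ?_, ?_⟩
  · intro r h1 h2 col
    simp [Mfun, h1, h2]
  · intro ho
    have h0 : s % 2 = 1 := Nat.odd_iff.mp ho
    refine ⟨by simp [Mfun, h0, hij], by simp [Mfun, h0, hij, hji],
      fun col hc1 hc2 => by simp [Mfun, h0, hij, hji, hc1, hc2],
      by simp [Mfun, h0, hij, hji], by simp [Mfun, h0, hij, hji],
      fun col hc1 hc2 => by simp [Mfun, h0, hij, hji, hc1, hc2]⟩
  · intro he
    have h0 : s % 2 = 0 := Nat.even_iff.mp he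
    refine ⟨by simp [Mfun, h0, hij], by simp [Mfun, h0, hij, hji],
      fun col hc1 hc2 => by simp [Mfun, h0, hij, hji, hc1, hc2],
      by simp [Mfun, h0, hij, hji], by simp [Mfun, h0, hij, hji],
      fun col hc1 hc2 => by simp [Mfun, h0, hij, hji, hc1, hc2]⟩
end

section
/- Let r and s be odd positive integers and set u = rs + 1. Then the third row of the 4×4 integer matrix W₄₃(s)·W₃₂(r) equals (u² + s² − 1 + su, −su, −rs + (r+1)s(s+1), 1 + s − rs(r−1) + r(r+1)s(s+1)). -/
lemma swapProd_step (j i : Fin 4) (k : ℕ) :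
    SwapProd j i (2*k+3) = ApGen i * (ApGen j * SwapProd j i (2*k+1)) := by
  have h1 : (2*k+3) % 2 = 1 := by omega
  show (if (2*k+2+1) % 2 = 1 then ApGen i else ApGen j) * SwapProd j i (2*k+2) = _
  rw [show 2*k+2+1 = 2*k+3 from rfl, if_pos h1]
  show ApGen i * ((if (2*k+1+1) % 2 = 1 then ApGen i else ApGen j) * SwapProd j i (2*k+1)) = _
  rw [show 2*k+1+1 = 2*k+2 from rfl, if_neg (by omega)]

def M32 (s : ℤ) : Matrix (Fin 4) (Fin 4) ℤ :=
  !![1,0,0,0; 0,1,0,0; s*(s+1), s*(s+1), -s, s+1; (s-1)*s, (s-1)*s, -(s-1), s]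

def M21 (r : ℤ) : Matrix (Fin 4) (Fin 4) ℤ :=
  !![1,0,0,0; r*(r+1), -r, r+1, r*(r+1); (r-1)*r, -(r-1), r, (r-1)*r; 0,0,0,1]

lemma W32_odd (k : ℕ) : SwapProd 3 2 (2*k+1) = M32 (2*k+1 : ℤ) := by
  induction k with
  | zero =>
    show (if 1 % 2 = 1 then ApGen 2 else ApGen 3) * SwapProd 3 2 0 = _
    rw [if_pos rfl]
    show ApGen 2 * 1 = _
    rw [mul_one]
    ext a b
    fin_cases a <;> fin_cases b <;> simp [ApGen, M32] <;> norm_num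
  | succ k ih =>
    rw [show 2*(k+1)+1 = 2*k+3 from by ring, swapProd_step, ih]
    ext a b
    fin_cases a <;> fin_cases b <;>
      simp [ApGen, M32, Matrix.mul_apply, Fin.sum_univ_four] <;> push_cast <;> ring

lemma W21_odd (k : ℕ) : SwapProd 2 1 (2*k+1) = M21 (2*k+1 : ℤ) := by
  induction k with
  | zero =>
    show (if 1 % 2 = 1 then ApGen 1 else ApGen 2) * SwapProd 2 1 0 = _
    rw [if_pos rfl]
    show ApGen 1 * 1 = _
    rw [mul_one]
    ext a b
    fin_cases a <;> fin_cases b <;> simp [ApGen, M21, Matrix.vecHead, Matrix.vecTail]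
  | succ k ih =>
    rw [show 2*(k+1)+1 = 2*k+3 from by ring, swapProd_step, ih]
    ext a b
    fin_cases a <;> fin_cases b <;>
      simp [ApGen, M21, Matrix.mul_apply, Fin.sum_univ_four] <;> push_cast <;> ring

/-- the third row of `W₄₃(s)·W₃₂(r)` for odd positive `r`, `s`
(here `W₄₃ = SwapProd 3 2` and `W₃₂ = SwapProd 2 1` in 0-indexed notation,
and the third row is row `2`). -/
theorem stmt_10 (r s : ℕ) (hr : Odd r) (hs : Odd s) (hr0 : 0 < r) (hs0 : 0 < s) :
    (SwapProd 3 2 s * SwapProd 2 1 r) 2 0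
        = ((r : ℤ) * s + 1) ^ 2 + (s : ℤ) ^ 2 - 1 + (s : ℤ) * ((r : ℤ) * s + 1) ∧
    (SwapProd 3 2 s * SwapProd 2 1 r) 2 1 = -((s : ℤ) * ((r : ℤ) * s + 1)) ∧
    (SwapProd 3 2 s * SwapProd 2 1 r) 2 2
        = -((r : ℤ) * s) + ((r : ℤ) + 1) * (s : ℤ) * ((s : ℤ) + 1) ∧
    (SwapProd 3 2 s * SwapProd 2 1 r) 2 3
        = 1 + (s : ℤ) - (r : ℤ) * s * ((r : ℤ) - 1)
            + (r : ℤ) * ((r : ℤ) + 1) * (s : ℤ) * ((s : ℤ) + 1) := by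
  obtain ⟨a, ha⟩ := hr
  obtain ⟨b, hb⟩ := hs
  subst ha hb
  rw [W32_odd b, W21_odd a]
  refine ⟨?_, ?_, ?_, ?_⟩ <;>
    simp [M32, M21, Matrix.mul_apply, Fin.sum_univ_four] <;> push_cast <;> ring
end

section
/- Let m > 1 be an integer with gcd(m, 30) = 1, and let (a,b,c,d) be a Descartes quadruple with gcd(c+d, m) = 1. Then there exist odd integers s₀ and r₀ with 1 ≤ s₀, r₀ ≤ 2m such that for every integer ℓ there is an even integer t with 0 ≤ t < 2m for which the third coordinate of the vector W₄₃(s₀)·W₃₂(r₀)·W₂₁(t)·(a,b,c,d)ᵀ is congruent to ℓ modulo m. -/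
lemma apGen0_mulVec (p q u v : ℤ) :
    (ApGen 0).mulVec ![p, q, u, v] = ![2*q + 2*u + 2*v - p, q, u, v] := by
  funext k
  fin_cases k <;>
    simp [ApGen, Matrix.mulVec, dotProduct, Fin.sum_univ_four] <;> ring

lemma apGen1_mulVec (p q u v : ℤ) :
    (ApGen 1).mulVec ![p, q, u, v] = ![p, 2*p + 2*u + 2*v - q, u, v] := by
  funext k
  fin_cases k <;>
    simp [ApGen, Matrix.mulVec, dotProduct, Fin.sum_univ_four] <;> ring

lemma apGen2_mulVec (p q u v : ℤ) :
    (ApGen 2).mulVec ![p, q, u, v] = ![p, q, 2*p + 2*q + 2*v - u, v] := by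
  funext k
  fin_cases k <;>
    simp [ApGen, Matrix.mulVec, dotProduct, Fin.sum_univ_four] <;> ring

lemma apGen3_mulVec (p q u v : ℤ) :
    (ApGen 3).mulVec ![p, q, u, v] = ![p, q, u, 2*p + 2*q + 2*u - v] := by
  funext k
  fin_cases k <;>
    simp [ApGen, Matrix.mulVec, dotProduct, Fin.sum_univ_four] <;> ring

lemma swapProd_odd (j i : Fin 4) (n : ℕ) :
    SwapProd j i (2*n+1) = ApGen i * SwapProd j i (2*n) := by
  have h : (2*n+1) % 2 = 1 := by omega
  rw [show 2*n+1 = (2*n)+1 from rfl, SwapProd]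
  simp [h]

lemma swapProd_even (j i : Fin 4) (n : ℕ) :
    SwapProd j i (2*n+2) = ApGen j * SwapProd j i (2*n+1) := by
  have h : ¬ ((2*n+2) % 2 = 1) := by omega
  rw [show 2*n+2 = (2*n+1)+1 from rfl, SwapProd]
  simp [h]

lemma w10_aux (a b c d : ℤ) (n : ℕ) :
    (SwapProd 1 0 (2*n)).mulVec ![a, b, c, d] =
      ![(c+d)*(2*(n:ℤ))^2 + (b-a-(c+d))*(2*(n:ℤ)) + a,
        (c+d)*(2*(n:ℤ)+1)^2 + (b-a-(c+d))*(2*(n:ℤ)+1) + a, c, d] ∧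
    (SwapProd 1 0 (2*n+1)).mulVec ![a, b, c, d] =
      ![(c+d)*(2*(n:ℤ)+2)^2 + (b-a-(c+d))*(2*(n:ℤ)+2) + a,
        (c+d)*(2*(n:ℤ)+1)^2 + (b-a-(c+d))*(2*(n:ℤ)+1) + a, c, d] := by
  induction n with
  | zero =>
      have h0 : (SwapProd 1 0 0).mulVec ![a, b, c, d] = ![a, b, c, d] := by
        simp [SwapProd, Matrix.one_mulVec]
      have h1 : (SwapProd 1 0 (2*0)).mulVec ![a, b, c, d] =
          ![(c+d)*(2*(0:ℤ))^2 + (b-a-(c+d))*(2*(0:ℤ)) + a,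
            (c+d)*(2*(0:ℤ)+1)^2 + (b-a-(c+d))*(2*(0:ℤ)+1) + a, c, d] := by
        rw [show 2*0 = 0 from rfl, h0]
        funext k; fin_cases k <;> simp <;> ring
      refine ⟨h1, ?_⟩
      rw [swapProd_odd, ← Matrix.mulVec_mulVec, h1, apGen0_mulVec]
      funext k; fin_cases k <;> simp <;> ring
  | succ n ih =>
      have h1 : (SwapProd 1 0 (2*(n+1))).mulVec ![a, b, c, d] =
          ![(c+d)*(2*((n:ℤ)+1))^2 + (b-a-(c+d))*(2*((n:ℤ)+1)) + a,
            (c+d)*(2*((n:ℤ)+1)+1)^2 + (b-a-(c+d))*(2*((n:ℤ)+1)+1) + a, c, d] := by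
        rw [show 2*(n+1) = 2*n+2 from by ring, swapProd_even, ← Matrix.mulVec_mulVec,
          ih.2, apGen1_mulVec]
        funext k; fin_cases k <;> simp <;> ring
      refine ⟨by push_cast at h1 ⊢; exact h1, ?_⟩
      rw [show 2*(n+1)+1 = 2*(n+1)+1 from rfl, show (2*(n+1)) = 2*(n+1) from rfl]
      rw [swapProd_odd, ← Matrix.mulVec_mulVec, h1, apGen0_mulVec]
      funext k; fin_cases k <;> push_cast <;> ring

lemma w21_aux (p q u v : ℤ) (n : ℕ) :
    (SwapProd 2 1 (2*n)).mulVec ![p, q, u, v] =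
      ![p, (p+v)*(2*(n:ℤ))^2 + (u-q-(p+v))*(2*(n:ℤ)) + q,
        (p+v)*(2*(n:ℤ)+1)^2 + (u-q-(p+v))*(2*(n:ℤ)+1) + q, v] ∧
    (SwapProd 2 1 (2*n+1)).mulVec ![p, q, u, v] =
      ![p, (p+v)*(2*(n:ℤ)+2)^2 + (u-q-(p+v))*(2*(n:ℤ)+2) + q,
        (p+v)*(2*(n:ℤ)+1)^2 + (u-q-(p+v))*(2*(n:ℤ)+1) + q, v] := by
  induction n with
  | zero =>
      have h1 : (SwapProd 2 1 (2*0)).mulVec ![p, q, u, v] =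
          ![p, (p+v)*(2*(0:ℤ))^2 + (u-q-(p+v))*(2*(0:ℤ)) + q,
            (p+v)*(2*(0:ℤ)+1)^2 + (u-q-(p+v))*(2*(0:ℤ)+1) + q, v] := by
        rw [show 2*0 = 0 from rfl]
        funext k; fin_cases k <;> simp [SwapProd, Matrix.one_mulVec] <;> ring
      refine ⟨h1, ?_⟩
      rw [swapProd_odd, ← Matrix.mulVec_mulVec, h1, apGen1_mulVec]
      funext k; fin_cases k <;> simp <;> ring
  | succ n ih =>
      have h1 : (SwapProd 2 1 (2*(n+1))).mulVec ![p, q, u, v] =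
          ![p, (p+v)*(2*((n:ℤ)+1))^2 + (u-q-(p+v))*(2*((n:ℤ)+1)) + q,
            (p+v)*(2*((n:ℤ)+1)+1)^2 + (u-q-(p+v))*(2*((n:ℤ)+1)+1) + q, v] := by
        rw [show 2*(n+1) = 2*n+2 from by ring, swapProd_even, ← Matrix.mulVec_mulVec,
          ih.2, apGen2_mulVec]
        funext k; fin_cases k <;> simp <;> ring
      refine ⟨by push_cast at h1 ⊢; exact h1, ?_⟩
      rw [swapProd_odd, ← Matrix.mulVec_mulVec, h1, apGen1_mulVec]
      funext k; fin_cases k <;> push_cast <;> ring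

lemma w32_aux (p q u v : ℤ) (n : ℕ) :
    (SwapProd 3 2 (2*n)).mulVec ![p, q, u, v] =
      ![p, q, (p+q)*(2*(n:ℤ))^2 + (v-u-(p+q))*(2*(n:ℤ)) + u,
        (p+q)*(2*(n:ℤ)+1)^2 + (v-u-(p+q))*(2*(n:ℤ)+1) + u] ∧
    (SwapProd 3 2 (2*n+1)).mulVec ![p, q, u, v] =
      ![p, q, (p+q)*(2*(n:ℤ)+2)^2 + (v-u-(p+q))*(2*(n:ℤ)+2) + u,
        (p+q)*(2*(n:ℤ)+1)^2 + (v-u-(p+q))*(2*(n:ℤ)+1) + u] := by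
  induction n with
  | zero =>
      have h1 : (SwapProd 3 2 (2*0)).mulVec ![p, q, u, v] =
          ![p, q, (p+q)*(2*(0:ℤ))^2 + (v-u-(p+q))*(2*(0:ℤ)) + u,
            (p+q)*(2*(0:ℤ)+1)^2 + (v-u-(p+q))*(2*(0:ℤ)+1) + u] := by
        rw [show 2*0 = 0 from rfl]
        funext k; fin_cases k <;> simp [SwapProd, Matrix.one_mulVec] <;> ring
      refine ⟨h1, ?_⟩
      rw [swapProd_odd, ← Matrix.mulVec_mulVec, h1, apGen2_mulVec]
      funext k; fin_cases k <;> simp <;> ring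
  | succ n ih =>
      have h1 : (SwapProd 3 2 (2*(n+1))).mulVec ![p, q, u, v] =
          ![p, q, (p+q)*(2*((n:ℤ)+1))^2 + (v-u-(p+q))*(2*((n:ℤ)+1)) + u,
            (p+q)*(2*((n:ℤ)+1)+1)^2 + (v-u-(p+q))*(2*((n:ℤ)+1)+1) + u] := by
        rw [show 2*(n+1) = 2*n+2 from by ring, swapProd_even, ← Matrix.mulVec_mulVec,
          ih.2, apGen3_mulVec]
        funext k; fin_cases k <;> simp <;> ring
      refine ⟨by push_cast at h1 ⊢; exact h1, ?_⟩
      rw [swapProd_odd, ← Matrix.mulVec_mulVec, h1, apGen2_mulVec]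
      funext k; fin_cases k <;> push_cast <;> ring


lemma key_identity {α : Type*} [CommRing α] (a b c d x y N : α)
    (hx : 2*x + 1 = 2) (hy : 5*(2*y+1) + 4 = 0) :
    25 * ((((c+d)*(2*N)^2 + (b-a-(c+d))*(2*N) + a)+((((c+d)*(2*N)^2 + (b-a-(c+d))*(2*N) + a)+d)*(2*x+2)^2 + (c-((c+d)*(2*N+1)^2 + (b-a-(c+d))*(2*N+1) + a)-(((c+d)*(2*N)^2 + (b-a-(c+d))*(2*N) + a)+d))*(2*x+2) + ((c+d)*(2*N+1)^2 + (b-a-(c+d))*(2*N+1) + a)))*(2*y+2)^2 + (d-((((c+d)*(2*N)^2 + (b-a-(c+d))*(2*N) + a)+d)*(2*x+1)^2 + (c-((c+d)*(2*N+1)^2 + (b-a-(c+d))*(2*N+1) + a)-(((c+d)*(2*N)^2 + (b-a-(c+d))*(2*N) + a)+d))*(2*x+1) + ((c+d)*(2*N+1)^2 + (b-a-(c+d))*(2*N+1) + a))-(((c+d)*(2*N)^2 + (b-a-(c+d))*(2*N) + a)+((((c+d)*(2*N)^2 + (b-a-(c+d))*(2*N) + a)+d)*(2*x+2)^2 + (c-((c+d)*(2*N+1)^2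 + (b-a-(c+d))*(2*N+1) + a)-(((c+d)*(2*N)^2 + (b-a-(c+d))*(2*N) + a)+d))*(2*x+2) + ((c+d)*(2*N+1)^2 + (b-a-(c+d))*(2*N+1) + a))))*(2*y+2) + ((((c+d)*(2*N)^2 + (b-a-(c+d))*(2*N) + a)+d)*(2*x+1)^2 + (c-((c+d)*(2*N+1)^2 + (b-a-(c+d))*(2*N+1) + a)-(((c+d)*(2*N)^2 + (b-a-(c+d))*(2*N) + a)+d))*(2*x+1) + ((c+d)*(2*N+1)^2 + (b-a-(c+d))*(2*N+1) + a))) =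
    25 * ((a+((a+d)*(2*x+2)^2 + (c-b-(a+d))*(2*x+2) + b))*(2*y+2)^2 + (d-((a+d)*(2*x+1)^2 + (c-b-(a+d))*(2*x+1) + b)-(a+((a+d)*(2*x+2)^2 + (c-b-(a+d))*(2*x+2) + b)))*(2*y+2) + ((a+d)*(2*x+1)^2 + (c-b-(a+d))*(2*x+1) + b)) - 48*(c+d)*N := by
  linear_combination ((-400)*a*N*x*y^2 + (-400)*a*N*x*y + (-100)*a*N*x + (-600)*a*N*y^2 + (-800)*a*N*y + (-250)*a*N + (400)*b*N*x*y^2 + (400)*b*N*x*y + (100)*b*N*x + (600)*b*N*y^2 + (800)*b*N*y + (250)*b*N + (800)*c*N^2*x*y^2 + (800)*c*N^2*x*y + (200)*c*N^2*x + (1200)*c*N^2*y^2 + (1600)*c*N^2*y + (500)*c*N^2 + (-400)*c*N*x*y^2 + (-400)*c*N*x*y + (-100)*c*N*x + (-1000)*c*N*y^2 + (-1200)*c*N*y + (-350)*c*N + (800)*d*N^2*x*y^2 + (800)*d*N^2*x*y + (200)*d*N^2*x + (1200)*d*N^2*y^2 + (1600)*d*N^2*y + (500)*d*N^2 + (-400)*d*N*x*y^2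 + (-400)*d*N*x*y + (-100)*d*N*x + (-1000)*d*N*y^2 + (-1200)*d*N*y + (-350)*d*N) * hx + ((-100)*a*N*y + (-50)*a*N + (100)*b*N*y + (50)*b*N + (200)*c*N^2*y + (100)*c*N^2 + (-180)*c*N*y + (-78)*c*N + (200)*d*N^2*y + (100)*d*N^2 + (-180)*d*N*y + (-78)*d*N) * hy

lemma solve_lin {m : ℕ} [NeZero m] (g z : ZMod m) (hu : IsUnit g) :
    ∃ n : ℕ, n < m ∧ g * (n : ZMod m) = z := by
  refine ⟨(↑hu.unit⁻¹ * z : ZMod m).val, ZMod.val_lt _, ?_⟩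
  have h1 : (((↑hu.unit⁻¹ * z : ZMod m).val : ℕ) : ZMod m) = ↑hu.unit⁻¹ * z := by
    simp [ZMod.natCast_val, ZMod.cast_id]
  rw [h1, ← mul_assoc]
  nth_rewrite 1 [← hu.unit_spec]
  rw [Units.mul_inv, one_mul]

/-- for `gcd(m,30)=1` and a Descartes quadruple with `gcd(c+d,m)=1`, there
are odd `s₀, r₀ ∈ [1, 2m]` such that every residue class mod `m` is attained by the third
coordinate of `W₄₃(s₀)·W₃₂(r₀)·W₂₁(t)·(a,b,c,d)ᵀ` for some even `t` with `0 ≤ t < 2m`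
(0-indexed: `W₄₃ = SwapProd 3 2`, `W₃₂ = SwapProd 2 1`, `W₂₁ = SwapProd 1 0`). -/
theorem stmt_11 (m : ℕ) (hm : 1 < m) (hm30 : Nat.Coprime m 30)
    (a b c d : ℤ)
    (hDesc : 2 * (a ^ 2 + b ^ 2 + c ^ 2 + d ^ 2) = (a + b + c + d) ^ 2)
    (hcd : Int.gcd (c + d) (m : ℤ) = 1) :
    ∃ s₀ r₀ : ℕ, Odd s₀ ∧ Odd r₀ ∧ 1 ≤ s₀ ∧ s₀ ≤ 2 * m ∧ 1 ≤ r₀ ∧ r₀ ≤ 2 * m ∧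
      ∀ ℓ : ℤ, ∃ t : ℕ, Even t ∧ t < 2 * m ∧
        ((SwapProd 3 2 s₀ * SwapProd 2 1 r₀ * SwapProd 1 0 t).mulVec ![a, b, c, d]) 2
          ≡ ℓ [ZMOD (m : ℤ)] := by
  haveI : NeZero m := ⟨by omega⟩
  -- small coprimality facts
  have h2 : Nat.Coprime 2 m := Nat.Coprime.coprime_dvd_left (by norm_num) hm30.symm
  have h3 : Nat.Coprime 3 m := Nat.Coprime.coprime_dvd_left (by norm_num) hm30.symm
  have h5 : Nat.Coprime 5 m := Nat.Coprime.coprime_dvd_left (by norm_num) hm30.symm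
  have hmodd : m % 2 = 1 := by
    have : ¬ (2 ∣ m) := by
      intro hd
      have := Nat.dvd_gcd (dvd_refl 2) hd
      rw [h2] at this; omega
    omega
  have hu2 : IsUnit (2 : ZMod m) := by
    have := (ZMod.isUnit_iff_coprime 2 m).mpr h2; simpa using this
  have hu3 : IsUnit (3 : ZMod m) := by
    have := (ZMod.isUnit_iff_coprime 3 m).mpr h3; simpa using this
  have hu5 : IsUnit (5 : ZMod m) := by
    have := (ZMod.isUnit_iff_coprime 5 m).mpr h5; simpa using this
  have hu25 : IsUnit (25 : ZMod m) := by
    have := hu5.mul hu5; norm_num at this; exact this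
  have hu48 : IsUnit (48 : ZMod m) := by
    have h16 : IsUnit (16 : ZMod m) := by
      have := hu2.pow 4; norm_num at this; exact this
    have := h16.mul hu3; norm_num at this; exact this
  have hg : IsUnit ((c : ZMod m) + (d : ZMod m)) := by
    have hcop : IsCoprime (c+d) (m : ℤ) := Int.isCoprime_iff_gcd_eq_one.mpr hcd
    have hmap := hcop.map (Int.castRingHom (ZMod m))
    simp only [map_add, Int.coe_castRingHom, map_natCast, ZMod.natCast_self] at hmap
    have := isCoprime_zero_right.mp hmap
    simpa using this
  have hu48g : IsUnit ((48 : ZMod m) * ((c : ZMod m) + (d : ZMod m))) := hu48.mul hg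
  -- choose s₀
  have hx5 : (5 : ZMod m) * (-4 * ↑hu5.unit⁻¹) + 4 = 0 := by
    have h : (5 : ZMod m) * ↑hu5.unit⁻¹ = 1 := by
      nth_rewrite 1 [← hu5.unit_spec]
      exact Units.mul_inv _
    linear_combination (-4 : ZMod m) * h
  set xv : ZMod m := -4 * ↑hu5.unit⁻¹ with hxv
  obtain ⟨s₀, hs₀odd, hs₀ge, hs₀le, hs₀cast⟩ :
      ∃ s₀ : ℕ, Odd s₀ ∧ 1 ≤ s₀ ∧ s₀ ≤ 2*m ∧ ((s₀ : ℕ) : ZMod m) = xv := by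
    have hvlt : xv.val < m := ZMod.val_lt xv
    have hvcast : ((xv.val : ℕ) : ZMod m) = xv := by
      simp [ZMod.natCast_val, ZMod.cast_id]
    by_cases hpar : xv.val % 2 = 1
    · exact ⟨xv.val, Nat.odd_iff.mpr hpar, by omega, by omega, hvcast⟩
    · refine ⟨xv.val + m, Nat.odd_iff.mpr (by omega), by omega, by omega, ?_⟩
      push_cast [ZMod.natCast_self]
      rw [add_zero]; exact hvcast
  obtain ⟨σ, hσ⟩ := hs₀odd
  have hσ' : s₀ = 2*σ + 1 := hσ
  obtain ⟨ρ, hρ⟩ : ∃ ρ : ℕ, m + 2 = 2*ρ + 1 := ⟨(m+1)/2, by omega⟩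
  refine ⟨s₀, m + 2, ⟨σ, hσ⟩, ⟨ρ, by omega⟩, hs₀ge, hs₀le, by omega, by omega, ?_⟩
  -- key congruence hypotheses in ZMod m
  have hxx : 2*((ρ : ℕ) : ZMod m) + 1 = 2 := by
    have := congrArg (Nat.cast : ℕ → ZMod m) hρ
    push_cast [ZMod.natCast_self] at this
    linear_combination -this
  have hyy : 5*(2*((σ : ℕ) : ZMod m) + 1) + 4 = 0 := by
    have h1 : ((2*σ+1 : ℕ) : ZMod m) = xv := by rw [← hσ']; exact hs₀cast
    push_cast at h1
    rw [h1]; exact hx5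
  intro ℓ
  obtain ⟨n, hnlt, hn⟩ := solve_lin ((48 : ZMod m) * ((c : ZMod m) + (d : ZMod m)))
    (25 * (((a : ZMod m)+(((a : ZMod m)+(d : ZMod m))*(2*(ρ : ZMod m)+2)^2 + ((c : ZMod m)-(b : ZMod m)-((a : ZMod m)+(d : ZMod m)))*(2*(ρ : ZMod m)+2) + (b : ZMod m)))*(2*(σ : ZMod m)+2)^2 + ((d : ZMod m)-(((a : ZMod m)+(d : ZMod m))*(2*(ρ : ZMod m)+1)^2 + ((c : ZMod m)-(b : ZMod m)-((a : ZMod m)+(d : ZMod m)))*(2*(ρ : ZMod m)+1) + (b : ZMod m))-((a : ZMod m)+(((a : ZMod m)+(d : ZMod m))*(2*(ρ : ZMod m)+2)^2 + ((c : ZMod m)-(b : ZMod m)-((a : ZMod m)+(d : ZMod m)))*(2*(ρ : ZMod m)+2) + (b : ZMod m))))*(2*(σ : ZMod m)+2) + (((a : ZMod m)+(d : ZMod m))*(2*(ρ : ZMod m)+1)^2 + ((c : ZMod m)-(b : ZMod m)-((a : ZMod m)+(d : ZMod m)))*(2*(ρ : ZMod m)+1) + (b : ZMod m))) - 25 * (ℓ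 : ZMod m)) hu48g
  refine ⟨2*n, ⟨n, by omega⟩, by omega, ?_⟩
  -- unfold the matrix action
  rw [show (SwapProd 3 2 s₀ * SwapProd 2 1 (m+2) * SwapProd 1 0 (2*n)).mulVec ![a,b,c,d]
      = (SwapProd 3 2 s₀).mulVec ((SwapProd 2 1 (m+2)).mulVec
          ((SwapProd 1 0 (2*n)).mulVec ![a,b,c,d])) from by
    rw [← Matrix.mulVec_mulVec, ← Matrix.mulVec_mulVec]]
  rw [(w10_aux a b c d n).1]
  rw [hρ]
  rw [(w21_aux ((c+d)*(2*(n:ℤ))^2 + (b-a-(c+d))*(2*(n:ℤ)) + a) ((c+d)*(2*(n:ℤ)+1)^2 + (b-a-(c+d))*(2*(n:ℤ)+1) + a) c d ρ).2]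
  rw [hσ']
  rw [(w32_aux ((c+d)*(2*(n:ℤ))^2 + (b-a-(c+d))*(2*(n:ℤ)) + a) ((((c+d)*(2*(n:ℤ))^2 + (b-a-(c+d))*(2*(n:ℤ)) + a)+d)*(2*(ρ:ℤ)+2)^2 + (c-((c+d)*(2*(n:ℤ)+1)^2 + (b-a-(c+d))*(2*(n:ℤ)+1) + a)-(((c+d)*(2*(n:ℤ))^2 + (b-a-(c+d))*(2*(n:ℤ)) + a)+d))*(2*(ρ:ℤ)+2) + ((c+d)*(2*(n:ℤ)+1)^2 + (b-a-(c+d))*(2*(n:ℤ)+1) + a)) ((((c+d)*(2*(n:ℤ))^2 + (b-a-(c+d))*(2*(n:ℤ)) + a)+d)*(2*(ρ:ℤ)+1)^2 + (c-((c+d)*(2*(n:ℤ)+1)^2 + (b-a-(c+d))*(2*(n:ℤ)+1) + a)-(((c+d)*(2*(n:ℤ))^2 + (b-a-(c+d))*(2*(n:ℤ)) + a)+d))*(2*(ρ:ℤ)+1) + ((c+d)*(2*(n:ℤ)+1)^2 + (b-a-(c+d))*(2*(n:ℤ)+1) + a)) d σ).2]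
  have hcomp : ∀ w0 w1 w2 w3 : ℤ, (![w0, w1, w2, w3] : Fin 4 → ℤ) 2 = w2 := by
    intro w0 w1 w2 w3; simp
  rw [hcomp]
  refine (ZMod.intCast_eq_intCast_iff' _ _ _).mp ?_
  push_cast
  refine hu25.mul_left_cancel ?_
  have hkey := key_identity (a : ZMod m) (b : ZMod m) (c : ZMod m) (d : ZMod m)
    ((ρ : ℕ) : ZMod m) ((σ : ℕ) : ZMod m) ((n : ℕ) : ZMod m) hxx hyy
  linear_combination hkey - hn
end

section
/- Let m > 1 be an odd integer, and let (a,b,c,d) be a primitive Descartes quadruple in which d is an odd prime, a is odd, and a + d > 0. Then there exists an even integer k ≥ 0 such that c' := k(k+1)(a+d) − kb + (k+1)c (the third coordinate of W₃₂(k)·(a,b,c,d)ᵀ) satisfies c' > 0 and gcd(c' + d, m·d) = 1. -/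
private lemma quad_sub_dvd (A B C x y : ℤ) :
    (x - y) ∣ (A*x^2 + B*x + C) - (A*y^2 + B*y + C) :=
  ⟨A*(x+y)+B, by ring⟩

/-- A quadratic whose coefficients are not all divisible by an odd prime `p`
takes a value not divisible by `p`. -/
private lemma exists_nonroot (A B C : ℤ) (p : ℕ) (hp : p.Prime) (hpo : Odd p)
    (h : ¬((p:ℤ) ∣ A ∧ (p:ℤ) ∣ B ∧ (p:ℤ) ∣ C)) :
    ∃ r : ℤ, ¬ (p:ℤ) ∣ (A*r^2 + B*r + C) := by
  by_contra hc
  push_neg at hc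
  have h0 := hc 0
  have h1 := hc 1
  have h2 := hc (-1)
  have hC : (p:ℤ) ∣ C := by simpa using h0
  have hA2 : (p:ℤ) ∣ 2*A := by
    have := dvd_sub (dvd_add h1 h2) (hC.mul_left 2)
    have e : (A*1^2 + B*1 + C) + (A*(-1)^2 + B*(-1) + C) - 2*C = 2*A := by ring
    rwa [e] at this
  have hB2 : (p:ℤ) ∣ 2*B := by
    have := dvd_sub h1 h2
    have e : (A*1^2 + B*1 + C) - (A*(-1)^2 + B*(-1) + C) = 2*B := by ring
    rwa [e] at this
  have hp2 : ¬ (p:ℤ) ∣ 2 := by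
    intro hdd
    have hn : p ∣ 2 := Int.natCast_dvd_natCast.mp (by exact_mod_cast hdd)
    have : p = 2 := (Nat.prime_dvd_prime_iff_eq hp Nat.prime_two).mp hn
    rw [Nat.odd_iff] at hpo
    omega
  have hpZ : Prime (p:ℤ) := Nat.prime_iff_prime_int.mp hp
  have hA : (p:ℤ) ∣ A := (hpZ.dvd_mul.mp hA2).resolve_left hp2
  have hB : (p:ℤ) ∣ B := (hpZ.dvd_mul.mp hB2).resolve_left hp2
  exact h ⟨hA, hB, hC⟩

/-- CRT-style key lemma. -/
private lemma key_lemma (A B C : ℤ) : ∀ n : ℕ, Odd n →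
    (∀ p : ℕ, p.Prime → p ∣ n → ¬((p:ℤ) ∣ A ∧ (p:ℤ) ∣ B ∧ (p:ℤ) ∣ C)) →
    ∃ r : ℤ, ∀ p : ℕ, p.Prime → p ∣ n → ¬ (p:ℤ) ∣ (A*r^2 + B*r + C) := by
  intro n
  induction n using Nat.strong_induction_on with
  | _ n ih =>
    intro hn h
    have hn0 : n ≠ 0 := by rintro rfl; simp [Nat.odd_iff] at hn
    by_cases h1 : n = 1
    · refine ⟨0, fun p hp hpn => ?_⟩
      rw [h1] at hpn
      exact absurd (Nat.dvd_one.mp hpn) hp.one_lt.ne'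
    · set p := n.minFac with hpdef
      have hp : p.Prime := Nat.minFac_prime h1
      have hpn : p ∣ n := Nat.minFac_dvd n
      have hpodd : Odd p := by
        refine hp.odd_of_ne_two ?_
        intro h2
        rw [Nat.odd_iff] at hn
        rw [h2] at hpn
        omega
      set e := n.factorization p with hedef
      set n' := ordCompl[p] n with hn'def
      have hsplit : p ^ e * n' = n := Nat.ordProj_mul_ordCompl_eq_self n p
      have hpn' : ¬ p ∣ n' := Nat.not_dvd_ordCompl hp hn0
      have hn'dvd : n' ∣ n := Nat.ordCompl_dvd n p
      have hlt : n' < n := by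
        refine lt_of_le_of_ne (Nat.div_le_self _ _) ?_
        intro he
        exact hpn' (he ▸ hpn)
      have hn'odd : Odd n' := by
        rw [← Nat.not_even_iff_odd] at hn ⊢
        intro hev
        exact hn ((even_iff_two_dvd.mpr (dvd_trans (even_iff_two_dvd.mp hev) hn'dvd)))
      obtain ⟨r', hr'⟩ := ih n' hlt hn'odd (fun q hq hqn' => h q hq (hqn'.trans hn'dvd))
      obtain ⟨rp, hrp⟩ := exists_nonroot A B C p hp hpodd (h p hp hpn)
      have hcop : IsCoprime (p:ℤ) (n':ℤ) :=
        Nat.isCoprime_iff_coprime.mpr ((Nat.Prime.coprime_iff_not_dvd hp).mpr hpn')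
      obtain ⟨u, v, huv⟩ := hcop
      set r : ℤ := rp * (v * n') + r' * (u * p) with hrdef
      have hrp_cong : (p:ℤ) ∣ r - rp := ⟨(r' - rp) * u, by linear_combination rp * huv⟩
      have hr'_cong : (n':ℤ) ∣ r - r' := ⟨(rp - r') * v, by linear_combination r' * huv⟩
      refine ⟨r, fun q hq hqn hdvd => ?_⟩
      rcases (Nat.Prime.dvd_mul hq).mp (hsplit ▸ hqn) with hq1 | hq2
      · have hqp : q = p := (Nat.prime_dvd_prime_iff_eq hq hp).mp (hq.dvd_of_dvd_pow hq1)
        refine hrp ?_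
        have hd := hrp_cong.trans (quad_sub_dvd A B C r rp)
        have h' := dvd_sub (hqp ▸ hdvd) hd
        have e2 : (A*r^2+B*r+C) - ((A*r^2+B*r+C) - (A*rp^2+B*rp+C)) = A*rp^2+B*rp+C := by
          ring
        rwa [e2] at h'
      · refine hr' q hq hq2 ?_
        have hqn'Z : (q:ℤ) ∣ (n':ℤ) := Int.natCast_dvd_natCast.mpr hq2
        have hd := (hqn'Z.trans hr'_cong).trans (quad_sub_dvd A B C r r')
        have h' := dvd_sub hdvd hd
        have e2 : (A*r^2+B*r+C) - ((A*r^2+B*r+C) - (A*r'^2+B*r'+C)) = A*r'^2+B*r'+C := by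
          ring
        rwa [e2] at h'

set_option maxHeartbeats 1600000 in
/-- for `m > 1` odd and a primitive Descartes quadruple `(a,b,c,d)` with `d`
an odd prime, `a` odd, and `a + d > 0`, there is an even `k ≥ 0` such that
`c' = k(k+1)(a+d) − kb + (k+1)c` (the third coordinate of `W₃₂(k)·(a,b,c,d)ᵀ`) satisfies
`c' > 0` and `gcd(c' + d, m·d) = 1`. -/
theorem stmt_12 (m : ℤ) (hm : 1 < m) (hmodd : Odd m)
    (a b c d : ℤ)
    (hDesc : 2 * (a ^ 2 + b ^ 2 + c ^ 2 + d ^ 2) = (a + b + c + d) ^ 2)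
    (hprim : Int.gcd (Int.gcd (Int.gcd a b : ℤ) c : ℤ) d = 1)
    (hd : Prime d) (hdodd : Odd d) (haodd : Odd a) (had : 0 < a + d) :
    ∃ k : ℤ, Even k ∧ 0 ≤ k ∧
      0 < k * (k + 1) * (a + d) - k * b + (k + 1) * c ∧
      Int.gcd (k * (k + 1) * (a + d) - k * b + (k + 1) * c + d) (m * d) = 1 := by
  set A : ℤ := a + d with hA
  set B : ℤ := a + d - b + c with hB
  set C : ℤ := c + d with hC
  set n : ℕ := (m * d).natAbs with hn
  have hmd0 : m * d ≠ 0 := mul_ne_zero (by omega) hd.ne_zero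
  have hn0 : n ≠ 0 := by simpa [hn, Int.natAbs_eq_zero] using hmd0
  have hnodd : Odd n := Int.natAbs_odd.mpr (hmodd.mul hdodd)
  -- coefficient hypothesis
  have hcoeff : ∀ p : ℕ, p.Prime → p ∣ n → ¬((p:ℤ) ∣ A ∧ (p:ℤ) ∣ B ∧ (p:ℤ) ∣ C) := by
    intro p hp hpn hcon
    obtain ⟨hpA, hpB, hpC⟩ := hcon
    have hpodd : Odd p := by
      refine hp.odd_of_ne_two ?_
      rintro rfl
      rw [Nat.odd_iff] at hnodd
      omega
    by_cases hpd : (p:ℤ) ∣ d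
    · have hpa : (p:ℤ) ∣ a := by
        have := dvd_sub hpA hpd; simpa [hA] using this
      have hpc : (p:ℤ) ∣ c := by
        have := dvd_sub hpC hpd; simpa [hC] using this
      have hpb : (p:ℤ) ∣ b := by
        have := dvd_sub (dvd_add hpA hpC) (dvd_add hpB hpd)
        have e : (A + C) - (B + d) = b := by rw [hA, hB, hC]; ring
        rwa [e] at this
      have hone : (p:ℤ) ∣ (1:ℤ) := by
        have h1 : (p:ℤ) ∣ (Int.gcd a b : ℤ) := Int.dvd_coe_gcd hpa hpb
        have h2 : (p:ℤ) ∣ (Int.gcd (Int.gcd a b : ℤ) c : ℤ) := Int.dvd_coe_gcd h1 hpc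
        have h3 : (p:ℤ) ∣ (Int.gcd (Int.gcd (Int.gcd a b : ℤ) c : ℤ) d : ℤ) :=
          Int.dvd_coe_gcd h2 hpd
        rwa [hprim] at h3
      have hp1 : p ∣ 1 := by exact_mod_cast hone
      exact hp.one_lt.ne' (Nat.dvd_one.mp hp1)
    · haveI : Fact p.Prime := ⟨hp⟩
      have hZa : ((a : ZMod p)) = -(d : ZMod p) := by
        have : ((a + d : ℤ) : ZMod p) = 0 := (ZMod.intCast_zmod_eq_zero_iff_dvd _ p).mpr hpA
        push_cast at this
        linear_combination this
      have hZc : ((c : ZMod p)) = -(d : ZMod p) := by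
        have : ((c + d : ℤ) : ZMod p) = 0 := (ZMod.intCast_zmod_eq_zero_iff_dvd _ p).mpr hpC
        push_cast at this
        linear_combination this
      have hZb : ((b : ZMod p)) = -(d : ZMod p) := by
        have hbd : (p:ℤ) ∣ b + d := by
          have := dvd_sub (dvd_add hpA hpC) hpB
          have e : (A + C) - B = b + d := by rw [hA, hB, hC]; ring
          rwa [e] at this
        have : ((b + d : ℤ) : ZMod p) = 0 := (ZMod.intCast_zmod_eq_zero_iff_dvd _ p).mpr hbd
        push_cast at this
        linear_combination this
      have hZD : (2 : ZMod p) * ((a:ZMod p)^2 + (b:ZMod p)^2 + (c:ZMod p)^2 + (d:ZMod p)^2)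
          = ((a:ZMod p) + b + c + d)^2 := by
        have := congrArg (fun z : ℤ => (z : ZMod p)) hDesc
        push_cast at this
        exact this
      rw [hZa, hZb, hZc] at hZD
      have h4d : (4 : ZMod p) * (d:ZMod p)^2 = 0 := by linear_combination hZD
      have h2ne : (2 : ZMod p) ≠ 0 := by
        intro h2
        have h2' : ((2:ℕ) : ZMod p) = 0 := by exact_mod_cast h2
        have hdv : p ∣ 2 := (ZMod.natCast_eq_zero_iff 2 p).mp h2'
        have : p = 2 := (Nat.prime_dvd_prime_iff_eq hp Nat.prime_two).mp hdv
        rw [Nat.odd_iff] at hpodd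
        omega
      have hdne : (d : ZMod p) ≠ 0 := by
        intro hz
        exact hpd ((ZMod.intCast_zmod_eq_zero_iff_dvd d p).mp hz)
      have h4 : (4 : ZMod p) = (2 : ZMod p) * 2 := by norm_num
      rcases mul_eq_zero.mp h4d with h | h
      · rw [h4] at h
        rcases mul_eq_zero.mp h with h | h <;> exact h2ne h
      · exact hdne (pow_eq_zero_iff (n := 2) (by norm_num) |>.mp h)
  obtain ⟨r, hr⟩ := key_lemma A B C n hnodd hcoeff
  -- choose k
  set T : ℤ := |B| + |C - d| + 1 with hT
  set t₀ : ℤ := if Even r then 0 else 1 with ht₀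
  set j : ℤ := T.natAbs + r.natAbs + 1 with hj
  set k : ℤ := r + (n:ℤ) * (t₀ + 2 * n * j) with hk
  have hn1 : (1:ℤ) ≤ (n:ℤ) := by exact_mod_cast Nat.one_le_iff_ne_zero.mpr hn0
  have hj0 : (0:ℤ) ≤ j := by positivity
  have ht₀0 : 0 ≤ t₀ := by rw [ht₀]; split <;> norm_num
  have hnt : 2*j ≤ (n:ℤ) * (t₀ + 2 * n * j) := by
    nlinarith [mul_nonneg hj0 (by nlinarith : (0:ℤ) ≤ (n:ℤ)^2 - 1),
      mul_nonneg (by linarith : (0:ℤ) ≤ (n:ℤ)) ht₀0]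
  have habs1 : T ≤ (T.natAbs : ℤ) := Int.le_natAbs
  have habs2 : -(r.natAbs : ℤ) ≤ r := by rcases Int.natAbs_eq r with h | h <;> omega
  have h2j : (2:ℤ) * j = 2 * (T.natAbs : ℤ) + 2 * (r.natAbs : ℤ) + 2 := by
    rw [hj]; push_cast; ring
  have hTabs : (0:ℤ) ≤ (T.natAbs : ℤ) := by positivity
  have hrabs : (0:ℤ) ≤ (r.natAbs : ℤ) := by positivity
  have hkeq : k = r + (n:ℤ) * (t₀ + 2 * n * j) := rfl
  have hkT : T ≤ k := by linarith
  have hk0 : 0 ≤ k := by linarith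
  have hkeven : Even k := by
    have hn_odd : Odd ((n:ℤ)) := by exact_mod_cast hnodd
    rcases Int.even_or_odd r with hre | hro
    · have ht0 : t₀ = 0 := by rw [ht₀, if_pos hre]
      have hke : k = r + (n:ℤ)*(2*n*j) := by rw [hkeq, ht0]; ring
      rw [hke]
      exact hre.add ⟨(n:ℤ)*n*j, by ring⟩
    · have ht1 : t₀ = 1 := by rw [ht₀, if_neg (Int.not_even_iff_odd.mpr hro)]
      have hke : k = r + (n:ℤ)*(1 + 2*n*j) := by rw [hkeq, ht1]
      rw [hke]
      exact hro.add_odd (hn_odd.mul ⟨(n:ℤ)*j, by ring⟩)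
  have hkr : (n:ℤ) ∣ k - r := ⟨t₀ + 2 * n * j, by rw [hkeq]; ring⟩
  have hkgcd : ∀ q : ℕ, q.Prime → q ∣ n → ¬ (q:ℤ) ∣ (A*k^2 + B*k + C) := by
    intro q hq hqn hdvd
    have hqZ : (q:ℤ) ∣ (n:ℤ) := Int.natCast_dvd_natCast.mpr hqn
    have hdd := (hqZ.trans hkr).trans (quad_sub_dvd A B C k r)
    have h' := dvd_sub hdvd hdd
    have e2 : (A*k^2+B*k+C) - ((A*k^2+B*k+C) - (A*r^2+B*r+C)) = A*r^2+B*r+C := by ring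
    rw [e2] at h'
    exact hr q hq hqn h'
  clear_value A B C n T t₀ j k
  refine ⟨k, hkeven, hk0, ?_, ?_⟩
  · -- positivity
    have hA1 : 1 ≤ A := had
    have hkT' : |B| + |C - d| + 1 ≤ k := by rw [hT] at hkT; exact hkT
    have h1 : |B| ≥ B := le_abs_self B
    have h2 : |B| ≥ -B := neg_le_abs B
    have h3 : |C - d| ≥ C - d := le_abs_self _
    have h4 : |C - d| ≥ -(C - d) := neg_le_abs _
    have hB0 : (0:ℤ) ≤ |B| := abs_nonneg B
    have hCd0 : (0:ℤ) ≤ |C - d| := abs_nonneg (C - d)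
    have hgoal : 0 < A*k^2 + B*k + (C - d) := by
      nlinarith [mul_nonneg hk0 (by linarith : (0:ℤ) ≤ k - |B| - |C - d| - 1),
        mul_nonneg hCd0 (by linarith : (0:ℤ) ≤ k - 1),
        mul_nonneg (by linarith : (0:ℤ) ≤ A - 1) (sq_nonneg k),
        mul_nonneg hk0 (by linarith : (0:ℤ) ≤ |B| + B)]
    have he : k * (k + 1) * A - k * b + (k + 1) * c = A*k^2 + B*k + (C - d) := by
      rw [hA, hB, hC]; ring
    rw [he]; exact hgoal
  · -- gcd
    have hval : k * (k + 1) * A - k * b + (k + 1) * c + d = A*k^2 + B*k + C := by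
      rw [hA, hB, hC]; ring
    rw [hval]
    by_contra hg
    set g : ℕ := Int.gcd (A*k^2 + B*k + C) (m*d) with hg'
    have hgd : g ∣ n := by
      have := @Int.gcd_dvd_right (A*k^2 + B*k + C) (m*d)
      rw [hn]
      exact Int.natCast_dvd.mp this
    have hgne : g ≠ 0 := by
      intro h0
      have h1 := Int.gcd_eq_zero_iff.mp h0
      have : (m*d).natAbs = 0 := by simpa [Int.natAbs_eq_zero] using h1.2
      exact hn0 (hn ▸ this)
    have hg2 : 2 ≤ g := by omega
    have hqp : g.minFac.Prime := Nat.minFac_prime (by omega)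
    have hqg : g.minFac ∣ g := Nat.minFac_dvd g
    have hqn : g.minFac ∣ n := hqg.trans hgd
    have hqf : (g.minFac:ℤ) ∣ (A*k^2 + B*k + C) := by
      have h1 : (g.minFac:ℤ) ∣ (g:ℤ) := Int.natCast_dvd_natCast.mpr hqg
      exact h1.trans (Int.gcd_dvd_left _ _)
    exact hkgcd g.minFac hqp hqn hqf
end

section
/- Let p ≥ 7 be a prime, let n ≥ 1, and set m = pⁿ. Let d be an integer with p ∤ d and let k be any integer. Then there exists an integer a such that p ∤ a, p ∤ (a + d), and a² + (2d − k)a − kd is congruent modulo m to a square, i.e. there is an integer w with a² + (2d − k)a − kd ≡ w² (mod m). -/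
open Polynomial

lemma stmt13_aux (p : ℕ) (hp : p.Prime) (hp7 : 7 ≤ p) (D K : ZMod p) :
    ∃ c : ZMod p, c ^ 2 + K * D ≠ 0 ∧ (c - D) ^ 2 + D ^ 2 ≠ 0 ∧ 2 * c - (2 * D - K) ≠ 0 := by
  haveI : Fact p.Prime := ⟨hp⟩
  set f : (ZMod p)[X] :=
    (X ^ 2 + C (K * D)) * ((X - C D) ^ 2 + C (D ^ 2)) * (2 * X - C (2 * D - K)) with hf
  have h2 : (2 : ZMod p) ≠ 0 := by
    have hnd : ¬ (p ∣ 2) := by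
      intro h; have := Nat.le_of_dvd (by norm_num) h; omega
    intro h
    exact hnd ((ZMod.natCast_eq_zero_iff 2 p).mp (by exact_mod_cast h))
  have hdeg : f.natDegree = 5 := by
    rw [hf]; compute_degree!
  have hf0 : f ≠ 0 := fun h => by simp [h] at hdeg
  obtain ⟨c, hc⟩ := f.exists_eval_ne_zero_of_natDegree_lt_card hf0 (by
    rw [hdeg]
    have : (Cardinal.mk (ZMod p)) = p := by
      simp [Cardinal.mk_fintype, ZMod.card]
    rw [this]
    exact_mod_cast (by omega : 5 < p))
  refine ⟨c, ?_, ?_, ?_⟩ <;> intro h <;> apply hc <;> simp [hf, h]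

/-- for a prime `p ≥ 7`, `m = pⁿ`, `p ∤ d`, and any integer `k`, there
exists `a` with `p ∤ a`, `p ∤ a + d`, and `a² + (2d − k)a − kd` a square modulo `m`. -/
theorem stmt_13 (p : ℕ) (hp : p.Prime) (hp7 : 7 ≤ p) (n : ℕ) (hn : 1 ≤ n)
    (d k : ℤ) (hd : ¬ (p : ℤ) ∣ d) :
    ∃ a w : ℤ, ¬ (p : ℤ) ∣ a ∧ ¬ (p : ℤ) ∣ (a + d) ∧
      a ^ 2 + (2 * d - k) * a - k * d ≡ w ^ 2 [ZMOD ((p : ℤ) ^ n)] := by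
  obtain ⟨c', h1, h2, h3⟩ := stmt13_aux p hp hp7 (d : ZMod p) (k : ZMod p)
  set c : ℤ := (c'.val : ℤ) with hc
  haveI : Fact p.Prime := ⟨hp⟩
  have hcF : ((c : ZMod p)) = c' := by
    rw [hc]; push_cast; simp [ZMod.natCast_val]
  -- translate the three conditions to divisibility statements
  have hnd1 : ¬ (p : ℤ) ∣ (k * d + c ^ 2) := by
    rw [← ZMod.intCast_zmod_eq_zero_iff_dvd]
    push_cast
    rw [hcF]
    intro h; apply h1; linear_combination h
  have hnd2 : ¬ (p : ℤ) ∣ (c ^ 2 - 2 * c * d + 2 * d ^ 2) := by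
    rw [← ZMod.intCast_zmod_eq_zero_iff_dvd]
    push_cast
    rw [hcF]
    intro h; apply h2; linear_combination h
  have hndu : ¬ (p : ℤ) ∣ (2 * d - k - 2 * c) := by
    rw [← ZMod.intCast_zmod_eq_zero_iff_dvd]
    push_cast
    rw [hcF]
    intro h; apply h3; linear_combination -h
  set u : ℤ := 2 * d - k - 2 * c with hu
  have hpZ : Prime (p : ℤ) := Int.prime_iff_natAbs_prime.mpr (by simpa using hp)
  have hcop : IsCoprime u ((p : ℤ) ^ n) :=
    (((hpZ.coprime_iff_not_dvd).mpr hndu).pow_left).symm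
  obtain ⟨x, y, hxy⟩ := hcop
  -- hxy : x * u + y * (p^n) = 1
  set a : ℤ := (k * d + c ^ 2) * x with ha
  refine ⟨a, a + c, ?_, ?_, ?_⟩
  · -- p ∤ a
    intro h
    rcases hpZ.dvd_mul.mp (ha ▸ h) with h' | h'
    · exact hnd1 h'
    · -- p ∣ x contradicts hxy since p ∣ p^n
      have hpn : (p : ℤ) ∣ (p : ℤ) ^ n := dvd_pow_self _ (by omega)
      have : (p : ℤ) ∣ 1 := by
        calc (p : ℤ) ∣ x * u + y * (p : ℤ) ^ n := dvd_add (h'.mul_right u) (hpn.mul_left y)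
        _ = 1 := hxy
      exact hp.one_lt.ne' (by exact_mod_cast Int.eq_one_of_dvd_one (by positivity) this)
  · -- p ∤ a + d
    intro h
    have hdu : (p : ℤ) ∣ u * (a + d) := h.mul_left u
    have hpn : (p : ℤ) ∣ (p : ℤ) ^ n := dvd_pow_self _ (by omega)
    have key : u * (a + d) - (c ^ 2 - 2 * c * d + 2 * d ^ 2) = (k * d + c ^ 2) * (-(y * (p:ℤ)^n)) := by
      rw [ha, hu]
      linear_combination (k * d + c ^ 2) * hxy
    have : (p : ℤ) ∣ (c ^ 2 - 2 * c * d + 2 * d ^ 2) := by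
      have h2' : (p : ℤ) ∣ (k * d + c ^ 2) * (-(y * (p:ℤ)^n)) := ((hpn.mul_left y).neg_right).mul_left _
      have := hdu.sub (key ▸ h2')
      simpa using this
    exact hnd2 this
  · -- the congruence
    rw [Int.modEq_iff_dvd]
    refine ⟨(k * d + c ^ 2) * y, ?_⟩
    rw [ha]
    linear_combination (-(k * d + c ^ 2)) * hxy
end

section
/- For every constant C > 0 there exist a constant C' > 0 and a real X₀ > eᵉ such that the following holds. For every real X ≥ X₀ and every set B of prime numbers satisfying card(B ∩ [2ᵏ, 2ᵏ⁺¹)) ≤ C·2ᵏ/k^{3/2} for every integer k ≥ 1, one has Σ_{(α₁,α₂) ∈ B_X × B_X, α₁ ≠ α₂} (1/(α₁·α₂))·∏_{p prime, p ∣ (α₁−α₂)} (1 + 1/p) ≤ C'·(log log log X)/(log log X). -/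
open Finset Nat

lemma pow_div_dvd_factorial {N p : ℕ} (hp : p.Prime) (hpN : p ≤ N) : p ^ (N / p) ∣ N ! := by
  rw [Nat.Prime.pow_dvd_factorial_iff hp (Nat.lt_succ_self _)]
  have h1 : 1 ∈ Finset.Ico 1 (Nat.log p N + 1) := by
    simp [Nat.succ_le_iff, Nat.log_pos hp.one_lt hpN]
  calc N / p = N / p ^ 1 := by norm_num
  _ ≤ ∑ i ∈ Finset.Ico 1 (Nat.log p N + 1), N / p ^ i :=
      Finset.single_le_sum (f := fun i => N / p ^ i) (fun i _ => Nat.zero_le _) h1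

lemma prod_pow_div_dvd_factorial (N : ℕ) :
    (∏ p ∈ (N + 1).primesBelow, p ^ (N / p)) ∣ N ! := by
  have hm0 : (∏ p ∈ (N + 1).primesBelow, p ^ (N / p)) ≠ 0 :=
    Finset.prod_ne_zero_iff.mpr fun p hp =>
      pow_ne_zero _ (Nat.prime_of_mem_primesBelow hp).pos.ne'
  rw [← Nat.factorization_le_iff_dvd hm0 N.factorial_pos.ne']
  rw [Nat.factorization_prod (fun p hp => pow_ne_zero _ (Nat.prime_of_mem_primesBelow hp).pos.ne')]
  intro q
  rw [Finset.sum_apply']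
  have : ∀ p ∈ (N + 1).primesBelow, ((p ^ (N / p)).factorization) q
      = if p = q then N / p else 0 := by
    intro p hp
    rw [(Nat.prime_of_mem_primesBelow hp).factorization_pow, Finsupp.single_apply]
  rw [Finset.sum_congr rfl this, Finset.sum_ite_eq']
  split_ifs with hq
  · have hq' := Nat.prime_of_mem_primesBelow hq
    have hqN : q ≤ N := Nat.lt_succ_iff.mp (Nat.lt_of_mem_primesBelow hq)
    exact (Nat.Prime.pow_dvd_iff_le_factorization hq' N.factorial_pos.ne').mp
      (pow_div_dvd_factorial hq' hqN)
  · exact Nat.zero_le _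

lemma mertens1 (N : ℕ) (hN : 2 ≤ N) :
    ∑ p ∈ (N + 1).primesBelow, Real.log p / p ≤ Real.log N + 2 := by
  have hN0 : (0:ℝ) < N := by positivity
  -- log of the product
  have hlogm : ∑ p ∈ (N + 1).primesBelow, ((N / p : ℕ) : ℝ) * Real.log p ≤ N * Real.log N := by
    have h1 : (∏ p ∈ (N + 1).primesBelow, p ^ (N / p)) ≤ N ! :=
      Nat.le_of_dvd N.factorial_pos (prod_pow_div_dvd_factorial N)
    have h2 : Real.log (∏ p ∈ (N + 1).primesBelow, (p:ℝ) ^ (N / p)) ≤ Real.log (N ^ N : ℕ) := by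
      apply Real.log_le_log (Finset.prod_pos fun p hp => by
        have := (Nat.prime_of_mem_primesBelow hp).pos
        positivity)
      push_cast [← Nat.cast_prod]
      exact_mod_cast le_trans h1 (Nat.factorial_le_pow N)
    rw [Real.log_prod (fun p hp => by
        have := (Nat.prime_of_mem_primesBelow hp).pos; positivity)] at h2
    simp only [Real.log_pow] at h2
    calc ∑ p ∈ (N + 1).primesBelow, ((N / p : ℕ) : ℝ) * Real.log p
        ≤ Real.log ((N:ℕ) ^ N : ℕ) := h2
      _ = N * Real.log N := by push_cast [Real.log_pow]; ring
  -- floor lower bound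
  have hfloor : ∀ p ∈ (N + 1).primesBelow,
      (N : ℝ) / p * Real.log p - Real.log p ≤ ((N / p : ℕ) : ℝ) * Real.log p := by
    intro p hp
    have hp' := Nat.prime_of_mem_primesBelow hp
    have hp0 : (0:ℝ) < p := by exact_mod_cast hp'.pos
    have hlp : 0 ≤ Real.log p := Real.log_natCast_nonneg p
    have : (N : ℝ) / p - 1 ≤ ((N / p : ℕ) : ℝ) := by
      have h : N < (N / p + 1) * p := (Nat.div_lt_iff_lt_mul hp'.pos).mp (Nat.lt_succ_self _)
      have h' : (N:ℝ) < ((N / p : ℕ) + 1) * p := by exact_mod_cast h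
      rw [div_sub_one hp0.ne', div_le_iff₀ hp0]
      nlinarith
    nlinarith
  have hprim : ∑ p ∈ (N + 1).primesBelow, Real.log p ≤ N * Real.log 4 := by
    have h1 : (primorial N : ℝ) ≤ (4:ℝ) ^ N := by exact_mod_cast primorial_le_4_pow N
    have h0 : (0:ℝ) < primorial N := by exact_mod_cast (primorial_pos N)
    have h2 : Real.log (primorial N) ≤ N * Real.log 4 := by
      calc Real.log (primorial N) ≤ Real.log ((4:ℝ) ^ N) := Real.log_le_log h0 h1
        _ = N * Real.log 4 := by rw [Real.log_pow]
    have h3 : Real.log (primorial N) = ∑ p ∈ (N + 1).primesBelow, Real.log p := by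
      have hc : (primorial N : ℝ) = ∏ p ∈ (N + 1).primesBelow, (p : ℝ) := by
        rw [primorial, Nat.primesBelow]; push_cast; rfl
      rw [hc, Real.log_prod]
      intro p hp
      exact_mod_cast (Nat.prime_of_mem_primesBelow hp).pos.ne'
    linarith
  have key : ∑ p ∈ (N + 1).primesBelow, (N : ℝ) / p * Real.log p
      ≤ N * Real.log N + N * Real.log 4 := by
    have h1 := Finset.sum_le_sum hfloor
    rw [Finset.sum_sub_distrib] at h1
    linarith
  have hexp : ∑ p ∈ (N + 1).primesBelow, (N : ℝ) / p * Real.log p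
      = N * ∑ p ∈ (N + 1).primesBelow, Real.log p / p := by
    rw [Finset.mul_sum]
    refine Finset.sum_congr rfl fun p hp => by ring
  rw [hexp] at key
  have hlog4 : Real.log 4 ≤ 2 := by
    have : (4:ℝ) = 2 ^ 2 := by norm_num
    rw [this, Real.log_pow]
    have := Real.log_two_lt_d9
    norm_num
    linarith
  have hfin : (N:ℝ) * (∑ p ∈ (N + 1).primesBelow, Real.log ↑p / ↑p)
      ≤ (N:ℝ) * (Real.log N + 2) := by nlinarith
  exact le_of_mul_le_mul_left hfin hN0


noncomputable def pA (N : ℕ) : ℝ := ∑ p ∈ (N + 1).primesBelow, Real.log p / p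
noncomputable def pS (N : ℕ) : ℝ := ∑ p ∈ (N + 1).primesBelow, 1 / (p : ℝ)

lemma pA_succ (N : ℕ) : pA (N + 1) = pA N +
    (if (N + 1).Prime then Real.log (N + 1) / (N + 1) else 0) := by
  rw [pA, pA, Nat.primesBelow_succ]
  split_ifs with h
  · rw [Finset.sum_insert (Nat.notMem_primesBelow _)]
    push_cast; ring
  · simp

lemma pS_succ (N : ℕ) : pS (N + 1) = pS N +
    (if (N + 1).Prime then 1 / ((N : ℝ) + 1) else 0) := by
  rw [pS, pS, Nat.primesBelow_succ]
  split_ifs with h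
  · rw [Finset.sum_insert (Nat.notMem_primesBelow _)]
    push_cast; ring
  · simp

lemma pA_nonneg (N : ℕ) : 0 ≤ pA N := by
  refine Finset.sum_nonneg fun p hp => ?_
  have := (Nat.prime_of_mem_primesBelow hp).pos
  have h1 : (0:ℝ) ≤ Real.log p := Real.log_natCast_nonneg p
  positivity

lemma mertens2_aux : ∀ N : ℕ, 2 ≤ N →
    pS N + (Real.log N + 2 - pA N) / Real.log N ≤ Real.log (Real.log N) + 6 := by
  intro N
  induction N with
  | zero => omega
  | succ n ih =>
    intro hn
    rcases Nat.lt_or_ge n 2 with h2 | h2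
    · -- base case : n + 1 = 2
      interval_cases n
      · omega
      · -- N = 2
        have hl2 : Real.log 2 > 0.6931 := by
          have := Real.log_two_gt_d9; linarith
        have hl2' : Real.log 2 < 0.6932 := by
          have := Real.log_two_lt_d9; linarith
        have hS : pS 2 = 1 / 2 := by
          rw [pS]
          have : (3 : ℕ).primesBelow = {2} := by decide
          rw [this]; norm_num
        have hA : pA 2 = Real.log 2 / 2 := by
          rw [pA]
          have : (3 : ℕ).primesBelow = {2} := by decide
          rw [this]; norm_num
        have hll : Real.log (Real.log 2) ≥ -Real.log 2 := by
          have h12 : Real.log (1/2) ≤ Real.log (Real.log 2) := by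
            apply Real.log_le_log (by norm_num)
            linarith
          rw [Real.log_div one_ne_zero two_ne_zero, Real.log_one] at h12
          linarith
        have : (Real.log 2 + 2 - pA 2) / Real.log 2 ≤ 3.9 := by
          rw [hA, div_le_iff₀ (by linarith)]
          nlinarith
        push_cast
        rw [hS] at *
        norm_num at *
        linarith
    · -- inductive step
      have ihn := ih h2
      have hn0 : (2:ℝ) ≤ (n:ℝ) := by exact_mod_cast h2
      have hlN : 0 < Real.log n := Real.log_pos (by linarith)
      have hlN1 : 0 < Real.log (n + 1) := Real.log_pos (by linarith)
      have hmono : Real.log n ≤ Real.log (n + 1) :=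
        Real.log_le_log (by linarith) (by linarith)
      set a := pA n with ha
      set lN := Real.log (n : ℝ)
      set lN1 := Real.log ((n : ℝ) + 1)
      have hA1 : pA (n + 1) = a + (if (n + 1).Prime then Real.log (n + 1) / (n + 1) else 0) :=
        pA_succ n
      have hS1 : pS (n + 1) = pS n + (if (n + 1).Prime then 1 / ((n : ℝ) + 1) else 0) :=
        pS_succ n
      set g : ℝ := if (n + 1).Prime then 1 / ((n : ℝ) + 1) else 0 with hg
      have hAg : pA (n + 1) = a + g * lN1 := by
        rw [hA1, hg]
        split_ifs
        · push_cast; ring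
        · simp
      -- key rewrite of LHS at n+1
      have hL1 : pS (n + 1) + (lN1 + 2 - pA (n + 1)) / lN1
          = pS n + (lN1 + 2 - a) / lN1 := by
        rw [hS1, hAg]
        field_simp
        ring
      -- bound on the increment
      have hM1 : a - 2 ≤ lN := by
        have hpa : pA n ≤ Real.log (n:ℝ) + 2 := mertens1 n h2
        rw [← ha] at hpa
        linarith
      have hstep : (lN1 + 2 - a) / lN1 - (lN + 2 - a) / lN ≤ (lN1 - lN) / lN1 := by
        have e1 : (lN1 + 2 - a) / lN1 - (lN + 2 - a) / lN
            = (a - 2) * ((lN1 - lN) / (lN * lN1)) := by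
          field_simp
          ring
        rw [e1]
        have h2' : (a - 2) * ((lN1 - lN) / (lN * lN1)) ≤ lN * ((lN1 - lN) / (lN * lN1)) := by
          apply mul_le_mul_of_nonneg_right hM1
          exact div_nonneg (by linarith) (by positivity)
        have e2 : lN * ((lN1 - lN) / (lN * lN1)) = (lN1 - lN) / lN1 := by
          field_simp
        linarith
      -- increment of log log
      have htgt : (lN1 - lN) / lN1 ≤ Real.log lN1 - Real.log lN := by
        have h1 : Real.log (lN / lN1) ≤ lN / lN1 - 1 :=
          Real.log_le_sub_one_of_pos (by positivity)
        rw [Real.log_div hlN.ne' hlN1.ne'] at h1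
        have : lN / lN1 - 1 = -((lN1 - lN) / lN1) := by field_simp; ring
        rw [this] at h1
        linarith
      push_cast
      rw [hL1]
      push_cast at htgt
      linarith

theorem mertens2 (N : ℕ) (hN : 2 ≤ N) :
    pS N ≤ Real.log (Real.log N) + 6 := by
  have h := mertens2_aux N hN
  have hlN : 0 < Real.log N := Real.log_pos (by exact_mod_cast by omega : (1:ℝ) < N)
  have hM := mertens1 N hN
  have : 0 ≤ (Real.log N + 2 - pA N) / Real.log N := by
    apply div_nonneg _ hlN.le
    rw [pA] at *
    linarith
  linarith


lemma sum_primeFactors_le (n : ℕ) (hn : 1 ≤ n) :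
    ∑ p ∈ n.primeFactors, 1 / (p : ℝ)
      ≤ Real.log (1 + Real.log (1 + Real.log n)) + 8 := by
  rcases eq_or_lt_of_le hn with h1 | h2
  · rw [← h1]
    simp
  have hn2 : 2 ≤ n := h2
  have hlogn : 0 < Real.log n := Real.log_pos (by exact_mod_cast hn2)
  set T : ℕ := ⌈Real.log n⌉₊ + 3 with hT
  have hT3 : 3 ≤ T := by omega
  have hTlog : Real.log n ≤ T := by
    have := Nat.le_ceil (Real.log n)
    push_cast [hT]
    linarith
  have hTub : (T : ℝ) ≤ Real.log n + 4 := by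
    have := Nat.ceil_lt_add_one hlogn.le
    push_cast [hT]
    linarith
  set y := Real.log (1 + Real.log n) with hy
  have hy0 : 0 ≤ y := Real.log_nonneg (by linarith)
  -- split
  rw [← Finset.sum_filter_add_sum_filter_not n.primeFactors (fun p => p ≤ T)]
  have hsmall : ∑ p ∈ n.primeFactors.filter (fun p => p ≤ T), 1 / (p : ℝ)
      ≤ Real.log (1 + y) + 7 := by
    have hsub : n.primeFactors.filter (fun p => p ≤ T) ⊆ (T + 1).primesBelow := by
      intro p hp
      rw [Finset.mem_filter] at hp
      rw [Nat.mem_primesBelow]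
      exact ⟨Nat.lt_succ_of_le hp.2, Nat.prime_of_mem_primeFactors hp.1⟩
    have h1 : ∑ p ∈ n.primeFactors.filter (fun p => p ≤ T), 1 / (p : ℝ) ≤ pS T := by
      apply Finset.sum_le_sum_of_subset_of_nonneg hsub
      intro p _ _; positivity
    have h2 : pS T ≤ Real.log (Real.log T) + 6 := mertens2 T (by omega)
    have h3 : Real.log (Real.log T) ≤ Real.log (1 + y) + 1 := by
      have hlT : 0 < Real.log T := Real.log_pos (by exact_mod_cast by omega : (1:ℝ) < T)
      have e4 : Real.log (T : ℝ) ≤ Real.log 4 + y := by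
        calc Real.log (T : ℝ) ≤ Real.log (4 * (1 + Real.log n)) := by
              apply Real.log_le_log (by exact_mod_cast Nat.pos_of_ne_zero (by omega))
              nlinarith
          _ = Real.log 4 + y := by
              rw [Real.log_mul (by norm_num) (by nlinarith), hy]
      have hlog4 : Real.log 4 ≤ 1.4 := by
        have h2' := Real.log_two_lt_d9
        have : (4:ℝ) = 2 ^ 2 := by norm_num
        rw [this, Real.log_pow]
        push_cast
        linarith
      calc Real.log (Real.log T) ≤ Real.log (1.4 * (1 + y)) := by
            apply Real.log_le_log hlT
            nlinarith
        _ = Real.log 1.4 + Real.log (1 + y) := Real.log_mul (by norm_num) (by nlinarith)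
        _ ≤ Real.log (1 + y) + 1 := by
            have : Real.log 1.4 ≤ 1.4 - 1 := Real.log_le_sub_one_of_pos (by norm_num)
            linarith
    linarith
  have hbig : ∑ p ∈ n.primeFactors.filter (fun p => ¬ p ≤ T), 1 / (p : ℝ) ≤ 1 := by
    set t := n.primeFactors.filter (fun p => ¬ p ≤ T) with ht
    have hdvd : ∏ p ∈ t, p ∣ n := by
      apply Finset.prod_primes_dvd
      · intro p hp
        exact (Nat.prime_of_mem_primeFactors (Finset.mem_filter.mp hp).1).prime
      · intro p hp
        exact Nat.dvd_of_mem_primeFactors (Finset.mem_filter.mp hp).1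
    have hprodle : (T + 1 : ℕ) ^ t.card ≤ n := by
      calc (T + 1 : ℕ) ^ t.card ≤ ∏ p ∈ t, p := by
            apply Finset.pow_card_le_prod
            intro p hp
            have := (Finset.mem_filter.mp hp).2
            omega
        _ ≤ n := Nat.le_of_dvd (by omega) hdvd
    have hcard : (t.card : ℝ) * Real.log (T + 1) ≤ Real.log n := by
      calc (t.card : ℝ) * Real.log (T + 1) = Real.log ((T + 1 : ℕ) ^ t.card : ℕ) := by
            push_cast [Real.log_pow]; ring
        _ ≤ Real.log n := Real.log_le_log (by positivity) (by exact_mod_cast hprodle)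
    have hlT1 : (1:ℝ) ≤ Real.log (T + 1) := by
      have : Real.log 4 ≤ Real.log ((T:ℝ) + 1) := by
        apply Real.log_le_log (by norm_num)
        have : (4:ℕ) ≤ T + 1 := by omega
        exact_mod_cast this
      have h2' := Real.log_two_gt_d9
      have e4 : Real.log 4 = 2 * Real.log 2 := by
        rw [show (4:ℝ) = 2 ^ 2 by norm_num, Real.log_pow]; push_cast; ring
      linarith
    have hcard' : (t.card : ℝ) ≤ Real.log n := by nlinarith [Real.log_natCast_nonneg n]
    calc ∑ p ∈ t, 1 / (p : ℝ) ≤ ∑ p ∈ t, 1 / ((T:ℝ) + 1) := by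
          apply Finset.sum_le_sum
          intro p hp
          have hp' := (Finset.mem_filter.mp hp).2
          have hppos : 0 < p := (Nat.prime_of_mem_primeFactors (Finset.mem_filter.mp hp).1).pos
          have : (T:ℝ) + 1 ≤ p := by exact_mod_cast by omega
          apply div_le_div_of_nonneg_left (by norm_num) (by positivity) this
      _ = t.card * (1 / ((T:ℝ) + 1)) := by
          rw [Finset.sum_const, nsmul_eq_mul]
      _ ≤ 1 := by
          rw [mul_one_div, div_le_one (by positivity)]
          linarith
  linarith


lemma prod_primeFactors_le (n : ℕ) (hn : 1 ≤ n) :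
    ∏ p ∈ n.primeFactors, (1 + 1 / (p : ℝ))
      ≤ Real.exp 8 * (1 + Real.log (1 + Real.log n)) := by
  have hlog : (0:ℝ) < 1 + Real.log (1 + Real.log n) := by
    have h1 : (0:ℝ) ≤ Real.log n := Real.log_natCast_nonneg n
    have h2 : (0:ℝ) ≤ Real.log (1 + Real.log n) := Real.log_nonneg (by linarith)
    linarith
  calc ∏ p ∈ n.primeFactors, (1 + 1 / (p : ℝ))
      ≤ ∏ p ∈ n.primeFactors, Real.exp (1 / (p : ℝ)) := by
        apply Finset.prod_le_prod
        · intro p hp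
          have := (Nat.prime_of_mem_primeFactors hp).pos
          positivity
        · intro p hp
          have := Real.add_one_le_exp (1 / (p:ℝ))
          linarith
    _ = Real.exp (∑ p ∈ n.primeFactors, 1 / (p : ℝ)) := by rw [Real.exp_sum]
    _ ≤ Real.exp (Real.log (1 + Real.log (1 + Real.log n)) + 8) :=
        Real.exp_le_exp.mpr (sum_primeFactors_le n hn)
    _ = Real.exp 8 * (1 + Real.log (1 + Real.log n)) := by
        rw [Real.exp_add, Real.exp_log hlog]; ring


/-- For `X ≥ eᵉ` and a set `B` of naturals, `BX X B` is the set of `α ∈ B` lying in a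
dyadic interval `[2ᵏ, 2ᵏ⁺¹)` for some integer `k` with `2·log log X ≤ k ≤ 3·log log X`. -/
def BX (X : ℝ) (B : Set ℕ) : Set ℕ :=
  {α | α ∈ B ∧ ∃ k : ℕ, 2 * Real.log (Real.log X) ≤ (k : ℝ) ∧
    (k : ℝ) ≤ 3 * Real.log (Real.log X) ∧ 2 ^ k ≤ α ∧ α < 2 ^ (k + 1)}

set_option maxHeartbeats 2000000 in
/-- for a set `B` of primes with `#(B ∩ [2ᵏ,2ᵏ⁺¹)) ≤ C·2ᵏ/k^{3/2}` for all
`k ≥ 1`, the off-diagonal pair sum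
`Σ_{α₁ ≠ α₂ ∈ B_X} (1/(α₁α₂))·∏_{p ∣ α₁−α₂} (1 + 1/p)` is
`≤ C'·(log log log X)/(log log X)` for all sufficiently large `X`. -/
theorem stmt_17 (C : ℝ) (hC : 0 < C) :
    ∃ C' : ℝ, 0 < C' ∧ ∃ X₀ : ℝ, Real.exp (Real.exp 1) < X₀ ∧
      ∀ X : ℝ, X₀ ≤ X → ∀ B : Set ℕ, (∀ q ∈ B, Nat.Prime q) →
        (∀ k : ℕ, 1 ≤ k →
          ((B ∩ Set.Ico (2 ^ k) (2 ^ (k + 1))).ncard : ℝ)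
            ≤ C * 2 ^ k / (k : ℝ) ^ ((3 : ℝ) / 2)) →
        (∑ᶠ q ∈ {q : ℕ × ℕ | q.1 ∈ BX X B ∧ q.2 ∈ BX X B ∧ q.1 ≠ q.2},
            (1 / ((q.1 : ℝ) * (q.2 : ℝ))) *
              ∏ p ∈ ((q.1 : ℤ) - (q.2 : ℤ)).natAbs.primeFactors, (1 + 1 / (p : ℝ)))
          ≤ C' * Real.log (Real.log (Real.log X)) / Real.log (Real.log X) := by
  classical
  refine ⟨Real.exp 8 * C ^ 2 + 1, by positivity, Real.exp (Real.exp 100), ?_, ?_⟩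
  · exact Real.exp_lt_exp.mpr (Real.exp_lt_exp.mpr (by norm_num))
  intro X hX B hBprime hBcount
  set L : ℝ := Real.log (Real.log X) with hLdef
  -- basic bounds on L
  have hX0 : (0:ℝ) < Real.exp (Real.exp 100) := Real.exp_pos _
  have hlogX : Real.exp 100 ≤ Real.log X := by
    have := Real.log_le_log hX0 hX
    rwa [Real.log_exp] at this
  have hL100 : (100:ℝ) ≤ L := by
    have h1 : Real.log (Real.exp 100) ≤ L := by
      apply Real.log_le_log (Real.exp_pos _) hlogX
    rwa [Real.log_exp] at h1
  have hL0 : (0:ℝ) < L := by linarith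
  have hlogL4 : (4:ℝ) ≤ Real.log L := by
    rw [show (4:ℝ) = Real.log (Real.exp 4) by rw [Real.log_exp]]
    apply Real.log_le_log (Real.exp_pos _)
    have he : Real.exp 4 = (Real.exp 1) ^ (4:ℕ) := by
      rw [← Real.exp_nat_mul]; norm_num
    have h1 := Real.exp_one_lt_d9
    have h2 : Real.exp 4 < 100 := by
      rw [he]
      calc (Real.exp 1) ^ (4:ℕ) < 2.7182818286 ^ (4:ℕ) :=
            pow_lt_pow_left₀ h1 (Real.exp_pos 1).le (by norm_num)
        _ < 100 := by norm_num
    linarith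
  have hlogL0 : (0:ℝ) < Real.log L := by linarith
  have hl2a : Real.log 2 < 0.6932 := by have := Real.log_two_lt_d9; linarith
  have hl2b : (0.6931:ℝ) < Real.log 2 := by have := Real.log_two_gt_d9; linarith
  -- the dyadic range
  set a : ℕ := ⌈2 * L⌉₊ with hadef
  set b : ℕ := ⌊3 * L⌋₊ with hbdef
  have haL : 2 * L ≤ a := Nat.le_ceil _
  have hbL : (b : ℝ) ≤ 3 * L := Nat.floor_le (by linarith)
  have ha1 : 1 ≤ a := by
    have : (0:ℝ) < 2 * L := by linarith
    exact Nat.ceil_pos.mpr this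
  -- the finite blocks
  set F : ℕ → Finset ℕ := fun k => (Finset.Ico (2 ^ k) (2 ^ (k + 1))).filter (· ∈ B) with hF
  set SX : Finset ℕ := (Finset.Icc a b).biUnion F with hSX
  have hBXsub : BX X B ⊆ ↑SX := by
    rintro α ⟨hαB, k, hk1, hk2, hk3, hk4⟩
    simp only [hSX, Finset.coe_biUnion, Set.mem_iUnion, Finset.mem_coe]
    refine ⟨k, ?_, ?_⟩
    · rw [Finset.mem_Icc]
      exact ⟨Nat.ceil_le.mpr hk1, Nat.le_floor hk2⟩
    · rw [hF]
      simp only [Finset.mem_filter, Finset.mem_Ico]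
      exact ⟨⟨hk3, hk4⟩, hαB⟩
  have hfinBX : (BX X B).Finite := Set.Finite.subset SX.finite_toSet hBXsub
  -- bound for the sum of reciprocals over SX
  have hSXsum : ∑ α ∈ SX, 1 / (α : ℝ) ≤ C / (2 * L) ^ ((1:ℝ)/2) := by
    have h2L : (0:ℝ) < 2 * L := by linarith
    have hdisj : Set.PairwiseDisjoint ↑(Finset.Icc a b) F := by
      intro k _ j _ hkj
      apply Finset.disjoint_left.mpr
      intro α hαk hαj
      rw [hF] at hαk hαj
      simp only [Finset.mem_filter, Finset.mem_Ico] at hαk hαj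
      rcases lt_or_gt_of_ne hkj with h | h
      · have := Nat.pow_le_pow_right (by norm_num : 1 ≤ 2) (h : k + 1 ≤ j)
        omega
      · have := Nat.pow_le_pow_right (by norm_num : 1 ≤ 2) (h : j + 1 ≤ k)
        omega
    rw [hSX, Finset.sum_biUnion hdisj]
    have hblock : ∀ k ∈ Finset.Icc a b, ∑ α ∈ F k, 1 / (α : ℝ) ≤ C / (k:ℝ) ^ ((3:ℝ)/2) := by
      intro k hk
      rw [Finset.mem_Icc] at hk
      have hk1 : 1 ≤ k := le_trans ha1 hk.1
      have hcard : (((F k).card : ℝ)) ≤ C * 2 ^ k / (k:ℝ) ^ ((3:ℝ)/2) := by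
        have h := hBcount k hk1
        have heq : (B ∩ Set.Ico (2 ^ k) (2 ^ (k + 1))) = ↑(F k) := by
          ext α
          simp only [hF, Finset.coe_filter, Set.mem_setOf_eq, Set.mem_inter_iff,
            Set.mem_Ico, Finset.mem_Ico]
          tauto
        rwa [heq, Set.ncard_coe_finset] at h
      have h2k : (0:ℝ) < 2 ^ k := by positivity
      calc ∑ α ∈ F k, 1 / (α : ℝ) ≤ ∑ α ∈ F k, 1 / (2 ^ k : ℝ) := by
            apply Finset.sum_le_sum
            intro α hα
            rw [hF] at hα
            simp only [Finset.mem_filter, Finset.mem_Ico] at hα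
            have : (2 ^ k : ℝ) ≤ α := by exact_mod_cast hα.1.1
            exact one_div_le_one_div_of_le h2k this
        _ = ((F k).card : ℝ) * (1 / (2 ^ k : ℝ)) := by
            rw [Finset.sum_const, nsmul_eq_mul]
        _ ≤ (C * 2 ^ k / (k:ℝ) ^ ((3:ℝ)/2)) * (1 / (2 ^ k : ℝ)) := by
            apply mul_le_mul_of_nonneg_right hcard (by positivity)
        _ = C / (k:ℝ) ^ ((3:ℝ)/2) := by
            have hkpow : (0:ℝ) < (k:ℝ) ^ ((3:ℝ)/2) :=
              Real.rpow_pos_of_pos (by exact_mod_cast hk1) _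
            field_simp
    have hconst : ∀ k ∈ Finset.Icc a b, C / (k:ℝ) ^ ((3:ℝ)/2) ≤ C / (2*L) ^ ((3:ℝ)/2) := by
      intro k hk
      rw [Finset.mem_Icc] at hk
      have hka : 2 * L ≤ (k:ℝ) := le_trans haL (by exact_mod_cast hk.1)
      apply div_le_div_of_nonneg_left hC.le (Real.rpow_pos_of_pos h2L _)
      exact Real.rpow_le_rpow h2L.le hka (by norm_num)
    have hcardK : (((Finset.Icc a b).card : ℕ) : ℝ) ≤ 2 * L := by
      rw [Nat.card_Icc]
      by_cases hab : a ≤ b + 1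
      · rw [Nat.cast_sub hab]
        push_cast
        linarith
      · rw [Nat.sub_eq_zero_of_le (by omega)]
        push_cast
        linarith
    have hppos : (0:ℝ) < (2*L) ^ ((3:ℝ)/2) := Real.rpow_pos_of_pos h2L _
    have hhalfpos : (0:ℝ) < (2*L) ^ ((1:ℝ)/2) := Real.rpow_pos_of_pos h2L _
    calc ∑ k ∈ Finset.Icc a b, ∑ α ∈ F k, 1 / (α : ℝ)
        ≤ ∑ k ∈ Finset.Icc a b, C / (2*L) ^ ((3:ℝ)/2) := by
          apply Finset.sum_le_sum
          intro k hk
          exact le_trans (hblock k hk) (hconst k hk)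
      _ = ((Finset.Icc a b).card : ℝ) * (C / (2*L) ^ ((3:ℝ)/2)) := by
          rw [Finset.sum_const, nsmul_eq_mul]
      _ ≤ (2 * L) * (C / (2*L) ^ ((3:ℝ)/2)) := by
          apply mul_le_mul_of_nonneg_right hcardK (by positivity)
      _ = C / (2 * L) ^ ((1:ℝ)/2) := by
          have h32 : (2*L) ^ ((3:ℝ)/2) = (2*L) * (2*L) ^ ((1:ℝ)/2) := by
            rw [show (3:ℝ)/2 = 1 + 1/2 by norm_num, Real.rpow_add h2L, Real.rpow_one]
          rw [h32]
          field_simp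
  have hSXnonneg : 0 ≤ ∑ α ∈ SX, 1 / (α : ℝ) := by
    apply Finset.sum_nonneg; intro α _; positivity
  -- uniform bound on products
  set M : ℝ := Real.exp 8 * (2 * Real.log L) with hM
  have hMnonneg : 0 ≤ M := by positivity
  have hprodM : ∀ q : ℕ × ℕ, q.1 ∈ BX X B → q.2 ∈ BX X B → q.1 ≠ q.2 →
      ∏ p ∈ ((q.1 : ℤ) - (q.2 : ℤ)).natAbs.primeFactors, (1 + 1 / (p : ℝ)) ≤ M := by
    rintro q ⟨_, k1, _, hk1b, _, hk1d⟩ ⟨_, k2, _, hk2b, _, hk2d⟩ hne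
    set Δ : ℕ := ((q.1 : ℤ) - (q.2 : ℤ)).natAbs with hΔ
    set D : ℕ := 2 ^ (b + 1) with hD
    have hq1D : q.1 < D := by
      have hk1 : k1 ≤ b := Nat.le_floor hk1b
      have : (2:ℕ) ^ (k1 + 1) ≤ 2 ^ (b + 1) := Nat.pow_le_pow_right (by norm_num) (by omega)
      omega
    have hq2D : q.2 < D := by
      have hk2 : k2 ≤ b := Nat.le_floor hk2b
      have : (2:ℕ) ^ (k2 + 1) ≤ 2 ^ (b + 1) := Nat.pow_le_pow_right (by norm_num) (by omega)
      omega
    have hΔ1 : 1 ≤ Δ := by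
      rw [hΔ]
      omega
    have hΔD : Δ ≤ D := by
      rw [hΔ]
      omega
    have hD1 : (1:ℕ) ≤ D := Nat.one_le_two_pow
    have hlogΔ : (0:ℝ) ≤ Real.log Δ := Real.log_natCast_nonneg _
    have hlogD : (0:ℝ) ≤ Real.log D := Real.log_natCast_nonneg _
    have hΔD' : Real.log Δ ≤ Real.log D :=
      Real.log_le_log (by exact_mod_cast hΔ1) (by exact_mod_cast hΔD)
    have hDval : Real.log D ≤ 3 * L := by
      have : Real.log (D:ℝ) = ((b:ℝ) + 1) * Real.log 2 := by
        rw [hD]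
        push_cast
        rw [Real.log_pow]
        push_cast
        ring
      rw [this]
      nlinarith
    have step1 : ∏ p ∈ Δ.primeFactors, (1 + 1 / (p : ℝ))
        ≤ Real.exp 8 * (1 + Real.log (1 + Real.log Δ)) := prod_primeFactors_le Δ hΔ1
    have step2 : Real.log (1 + Real.log Δ) ≤ Real.log (1 + Real.log D) :=
      Real.log_le_log (by linarith) (by linarith)
    have step3 : Real.log (1 + Real.log D) ≤ Real.log 4 + Real.log L := by
      calc Real.log (1 + Real.log D) ≤ Real.log (4 * L) := by
            apply Real.log_le_log (by linarith)
            nlinarith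
        _ = Real.log 4 + Real.log L := Real.log_mul (by norm_num) (by linarith)
    have hlog4 : Real.log 4 ≤ 1.39 := by
      rw [show (4:ℝ) = 2 ^ 2 by norm_num, Real.log_pow]
      push_cast
      linarith
    rw [hM]
    calc ∏ p ∈ Δ.primeFactors, (1 + 1 / (p : ℝ))
        ≤ Real.exp 8 * (1 + Real.log (1 + Real.log Δ)) := step1
      _ ≤ Real.exp 8 * (2 * Real.log L) := by
          have : 1 + Real.log (1 + Real.log Δ) ≤ 2 * Real.log L := by
            have := step2.trans step3
            linarith
          exact mul_le_mul_of_nonneg_left this (Real.exp_pos 8).le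
  -- the pair set is finite
  set P : Set (ℕ × ℕ) := {q : ℕ × ℕ | q.1 ∈ BX X B ∧ q.2 ∈ BX X B ∧ q.1 ≠ q.2} with hP
  have hfinP : P.Finite := by
    apply Set.Finite.subset (hfinBX.prod hfinBX)
    rintro q ⟨h1, h2, _⟩
    exact Set.mem_prod.mpr ⟨h1, h2⟩
  rw [finsum_mem_eq_finite_toFinset_sum _ hfinP]
  -- bound the sum
  have hsub : hfinP.toFinset ⊆ SX ×ˢ SX := by
    intro q hq
    rw [Set.Finite.mem_toFinset] at hq
    obtain ⟨h1, h2, _⟩ := hq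
    rw [Finset.mem_product]
    exact ⟨hBXsub h1, hBXsub h2⟩
  calc ∑ q ∈ hfinP.toFinset,
        (1 / ((q.1 : ℝ) * (q.2 : ℝ))) *
          ∏ p ∈ ((q.1 : ℤ) - (q.2 : ℤ)).natAbs.primeFactors, (1 + 1 / (p : ℝ))
      ≤ ∑ q ∈ hfinP.toFinset, (1 / ((q.1 : ℝ) * (q.2 : ℝ))) * M := by
        apply Finset.sum_le_sum
        intro q hq
        rw [Set.Finite.mem_toFinset] at hq
        obtain ⟨h1, h2, h3⟩ := hq
        exact mul_le_mul_of_nonneg_left (hprodM q h1 h2 h3) (by positivity)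
    _ ≤ ∑ q ∈ SX ×ˢ SX, (1 / ((q.1 : ℝ) * (q.2 : ℝ))) * M := by
        apply Finset.sum_le_sum_of_subset_of_nonneg hsub
        intro q _ _
        positivity
    _ = M * (∑ α ∈ SX, 1 / (α : ℝ)) ^ 2 := by
        rw [sq, Finset.sum_mul_sum, Finset.sum_product, Finset.mul_sum]
        refine Finset.sum_congr rfl fun x _ => ?_
        rw [Finset.mul_sum]
        refine Finset.sum_congr rfl fun y _ => ?_
        push_cast; ring
    _ ≤ M * (C / (2 * L) ^ ((1:ℝ)/2)) ^ 2 := by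
        apply mul_le_mul_of_nonneg_left _ hMnonneg
        exact pow_le_pow_left₀ hSXnonneg hSXsum 2
    _ = Real.exp 8 * C ^ 2 * Real.log L / L := by
        rw [div_pow, ← Real.rpow_natCast ((2*L) ^ ((1:ℝ)/2)) 2, ← Real.rpow_mul (by linarith)]
        norm_num
        rw [hM]
        field_simp
    _ ≤ (Real.exp 8 * C ^ 2 + 1) * Real.log L / L := by
        gcongr
        linarith
end

section
/- Let (a,b,c,d) be any quadruple of integers and let f(x) = (a+b)x² − (a+b+c−d)x + c. Then for every natural number s, (S₄S₃)ˢ·(a,b,c,d)ᵀ = (a, b, f(2s), f(2s+1))ᵀ. -/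
lemma apgen_step (x y z w : ℤ) :
    (ApGen 3 * ApGen 2).mulVec ![x, y, z, w] =
      ![x, y, 2*x + 2*y - z + 2*w, 6*x + 6*y - 2*z + 3*w] := by
  funext i
  fin_cases i <;>
    simp [ApGen, Matrix.mulVec, Matrix.mul_apply, Fin.sum_univ_four, dotProduct] <;>
    ring

/-- for any integer quadruple `(a,b,c,d)` and `f(x) = (a+b)x² − (a+b+c−d)x + c`,
one has `(S₄S₃)ˢ·(a,b,c,d)ᵀ = (a, b, f(2s), f(2s+1))ᵀ` (0-indexed: `S₄ = ApGen 3`,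
`S₃ = ApGen 2`). -/
theorem stmt_18 (a b c d : ℤ) (s : ℕ) :
    ((ApGen 3 * ApGen 2) ^ s).mulVec ![a, b, c, d] =
      ![a, b,
        (a + b) * (2 * (s : ℤ)) ^ 2 - (a + b + c - d) * (2 * (s : ℤ)) + c,
        (a + b) * (2 * (s : ℤ) + 1) ^ 2 - (a + b + c - d) * (2 * (s : ℤ) + 1) + c] := by
  induction s with
  | zero => funext i; fin_cases i <;> simp <;> ring
  | succ n ih =>
    rw [pow_succ', ← Matrix.mulVec_mulVec, ih, apgen_step]
    funext i
    fin_cases i <;> simp <;> push_cast <;> ring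
end

section
/- Let m > 1 be an integer with gcd(m, 30) = 1. Then there exist odd positive integers S and R such that (RS + 1)² + S² ≡ 1 (mod m) and gcd(2S(RS + 1), m) = 1. -/
/-- for `m > 1` coprime to 30 there are odd positive integers `S`, `R` with
`(RS+1)² + S² ≡ 1 (mod m)` and `gcd(2S(RS+1), m) = 1`. -/
theorem stmt_19 (m : ℤ) (hm : 1 < m) (hm30 : Int.gcd m 30 = 1) :
    ∃ S R : ℤ, Odd S ∧ Odd R ∧ 0 < S ∧ 0 < R ∧
      (R * S + 1) ^ 2 + S ^ 2 ≡ 1 [ZMOD m] ∧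
      Int.gcd (2 * S * (R * S + 1)) m = 1 := by
  have hm0 : (0:ℤ) < m := by linarith
  have hcop : IsCoprime m 30 := by
    rw [Int.isCoprime_iff_gcd_eq_one]; exact hm30
  have c2 : IsCoprime (2:ℤ) m := (hcop.of_isCoprime_of_dvd_right (by norm_num)).symm
  have c3 : IsCoprime (3:ℤ) m := (hcop.of_isCoprime_of_dvd_right (by norm_num)).symm
  have c5 : IsCoprime (5:ℤ) m := (hcop.of_isCoprime_of_dvd_right (by norm_num)).symm
  have c4 : IsCoprime (4:ℤ) m := by
    have := c2.mul_left c2; norm_num at this; exact this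
  -- m is odd
  have hmodd : Odd m := by
    rcases Int.even_or_odd m with he | ho
    · exfalso
      obtain ⟨x, hx⟩ := he
      have : (2:ℤ) ∣ Int.gcd m 30 := Int.dvd_coe_gcd ⟨x, by linarith⟩ (by norm_num)
      rw [hm30] at this
      norm_num at this
    · exact ho
  -- find t with 5 t ≡ -4 mod m
  obtain ⟨a, b, hab⟩ : ∃ a b : ℤ, 5 * a + m * b = 1 := by
    obtain ⟨u, v, huv⟩ := c5
    exact ⟨u, v, by linarith⟩
  set r : ℤ := (-4 * a) % m with hr
  have hr0 : 0 ≤ r := Int.emod_nonneg _ (by linarith)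
  have hd1 : m ∣ (-4 * a) - r := Int.dvd_self_sub_of_emod_eq rfl
  have hd2 : m ∣ 5 * (-4 * a) + 4 := ⟨4 * b, by linarith⟩
  have hrd : m ∣ 5 * r + 4 := by
    have h0 := dvd_sub hd2 (Dvd.dvd.mul_left hd1 5)
    have h : 5 * (-4 * a) + 4 - 5 * ((-4 * a) - r) = 5 * r + 4 := by ring
    rwa [h] at h0
  obtain ⟨k0, hk0⟩ := hrd
  set S : ℤ := if Odd r then r + 2 * m else r + m with hS
  -- key facts about S
  obtain ⟨k, hk⟩ : ∃ k : ℤ, 5 * S + 4 = m * k := by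
    rw [hS]; split
    · exact ⟨k0 + 10, by linarith⟩
    · exact ⟨k0 + 5, by linarith⟩
  have hSodd : Odd S := by
    rw [hS]; split
    · rename_i h
      exact h.add_even (by exact (even_two_mul m))
    · rename_i h
      rw [Int.not_odd_iff_even] at h
      exact h.add_odd hmodd
  have hSpos : 0 < S := by
    rw [hS]; split <;> linarith
  refine ⟨S, m + 2, hSodd, hmodd.add_even (by norm_num), hSpos, by linarith, ?_, ?_⟩
  · -- congruence
    rw [Int.modEq_iff_dvd]
    exact ⟨-(S * (m * S + 4 * S + 2 + k)), by linear_combination (-S) * hk⟩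
  · -- gcd
    rw [← Int.isCoprime_iff_gcd_eq_one]
    have cS : IsCoprime S m := by
      have h1 : IsCoprime (-4 + m * k) m := (c4.neg_left).add_mul_left_left k
      have h2 : (-4 : ℤ) + m * k = 5 * S := by linarith
      rw [h2] at h1
      exact h1.of_mul_left_right
    have cRS : IsCoprime ((m + 2) * S + 1) m := by
      have h1 : IsCoprime (-3 + m * (m * k + 2 * k - 4)) m :=
        (c3.neg_left).add_mul_left_left _
      have h2 : (-3 : ℤ) + m * (m * k + 2 * k - 4) = 5 * ((m + 2) * S + 1) := by
        linear_combination (-m - 2) * hk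
      rw [h2] at h1
      exact h1.of_mul_left_right
    exact (c2.mul_left cS).mul_left cRS
end
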